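/- For every type σ, both Enum_σ and Rep_σ hold: (i) for every variable x : σ the formula ⋁_{a∈Bσ} (↓σ a) ≐σ x is deducible, and (ii) for all finite sets A of formulas, all terms s, t : σ and every context C admissible for A, if A ⊢ s ≐σ t and A ⊢ C[s] then A ⊢ C[t]. Consequently (Deductive Completeness), every valid formula is deducible. -/

import Mathlib

namespace PTT


/-- Simple types over a single base type `B`. -/
inductive Ty : Type
  | base : Ty
  | arrow : Ty → Ty → Ty
deriving DecidableEq

/-- Names: the constants `⊥` and `→`, and variables (an index together with a type). -/
inductive Name : Type
  | bot : Name
  | imp : Name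
  | var : ℕ → Ty → Name
deriving DecidableEq

/-- The type of a name. -/
def Name.ty : Name → Ty
  | .bot => .base
  | .imp => .arrow .base (.arrow .base .base)
  | .var _ σ => σ

/-- Terms: names, abstraction over a variable, application. -/
inductive Tm : Type
  | name : Name → Tm
  | lam : ℕ → Ty → Tm → Tm
  | app : Tm → Tm → Tm
deriving DecidableEq

/-- The term `⊥`. -/
def botTm : Tm := .name .bot

/-- The variable `(n, σ)` as a term. -/
def vr (n : ℕ) (σ : Ty) : Tm := .name (.var n σ)

/-- Implication `s → t`. -/
def impTm (s t : Tm) : Tm := .app (.app (.name .imp) s) t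

/-- `⊤ := ⊥ → ⊥`. -/
def topTm : Tm := impTm botTm botTm

/-- `¬ s := s → ⊥`. -/
def negTm (s : Tm) : Tm := impTm s botTm

/-- `s ∨ t := (s → t) → t`. -/
def orTm (s t : Tm) : Tm := impTm (impTm s t) t

/-- `s ∧ t := ¬(¬s ∨ ¬t)`. -/
def andTm (s t : Tm) : Tm := negTm (orTm (negTm s) (negTm t))

/-- `s ≡ t := (s → t) ∧ (t → s)`. -/
def equivTm (s t : Tm) : Tm := andTm (impTm s t) (impTm t s)

/-- The typing relation. -/
inductive HasTy : Tm → Ty → Prop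
  | name (x : Name) : HasTy (.name x) x.ty
  | lam {n σ s τ} : HasTy s τ → HasTy (.lam n σ s) (.arrow σ τ)
  | app {s t σ τ} : HasTy s (.arrow σ τ) → HasTy t σ → HasTy (.app s t) τ

/-- Free variables of a term. -/
def fv : Tm → Finset (ℕ × Ty)
  | .name (.var n σ) => {(n, σ)}
  | .name _ => ∅
  | .lam n σ s => (fv s).erase (n, σ)
  | .app s t => fv s ∪ fv t

/-- A term is closed if it has no free variables. -/
def Closed (s : Tm) : Prop := fv s = ∅

/-- Capture-free parallel substitution (bound variables are renamed). -/
def substAux (ρ : ℕ × Ty → Tm) : Tm → Tm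
  | .name (.var n σ) => ρ (n, σ)
  | .name x => .name x
  | .app s t => .app (substAux ρ s) (substAux ρ t)
  | .lam n σ s =>
      let used : Finset ℕ :=
        ((fv s).erase (n, σ)).biUnion (fun p => (fv (ρ p)).image Prod.fst)
      let m : ℕ := used.sup id + 1
      .lam m σ (substAux (Function.update ρ (n, σ) (vr m σ)) s)

/-- Capture-free substitution `s[(n,σ) := t]`. -/
def subst (s : Tm) (n : ℕ) (σ : Ty) (t : Tm) : Tm :=
  substAux (Function.update (fun p => vr p.1 p.2) (n, σ) t) s

/-- Contexts: terms with exactly one hole (possibly under binders). -/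
inductive Ctx : Type
  | hole : Ctx
  | lam : ℕ → Ty → Ctx → Ctx
  | appL : Ctx → Tm → Ctx
  | appR : Tm → Ctx → Ctx

/-- Filling the hole of a context with a term (capturing is allowed). -/
def Ctx.fill : Ctx → Tm → Tm
  | .hole, s => s
  | .lam n σ C, s => .lam n σ (C.fill s)
  | .appL C t, s => .app (C.fill s) t
  | .appR t C, s => .app t (C.fill s)

/-- `C` captures the variable `p` if the hole of `C` lies below a binder for `p`. -/
def Ctx.captures : Ctx → ℕ × Ty → Prop
  | .hole, _ => False
  | .lam n σ C, p => p = (n, σ) ∨ C.captures p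
  | .appL C _, p => C.captures p
  | .appR _ C, p => C.captures p

/-- `C` is admissible for `A` if it captures no variable free in `A`. -/
def Ctx.Admissible (C : Ctx) (A : Finset Tm) : Prop :=
  ∀ p ∈ A.biUnion fv, ¬ C.captures p

/-- `s` is a subterm of `t`. -/
def Subterm (s t : Tm) : Prop := ∃ C : Ctx, C.fill s = t

/-- β-redexes. -/
def IsBetaRedex : Tm → Prop
  | .app (.lam _ _ _) _ => True
  | _ => False

/-- A term is β-normal if none of its subterms is a β-redex. -/
def BetaNormal (t : Tm) : Prop := ∀ s, Subterm s t → ¬ IsBetaRedex s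

/-- Lambda equivalence: the least equivalence on well-typed terms containing
α-, β-, η-conversion and closed under arbitrary contexts. -/
inductive LamEq : Tm → Tm → Prop
  | refl {s σ} : HasTy s σ → LamEq s s
  | symm {s t} : LamEq s t → LamEq t s
  | trans {s t u} : LamEq s t → LamEq t u → LamEq s u
  | alpha {n m σ s τ} : HasTy (.lam n σ s) τ → (m, σ) ∉ fv s →
      LamEq (.lam n σ s) (.lam m σ (subst s n σ (vr m σ)))
  | beta {n σ s t τ} : HasTy (.app (.lam n σ s) t) τ →
      LamEq (.app (.lam n σ s) t) (subst s n σ t)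
  | eta {n σ s τ} : HasTy (.lam n σ (.app s (vr n σ))) τ → (n, σ) ∉ fv s →
      LamEq (.lam n σ (.app s (vr n σ))) s
  | ctx {s t σ} (C : Ctx) : LamEq s t → HasTy (C.fill s) σ → LamEq (C.fill s) (C.fill t)

/-- The standard set-theoretic interpretation of types: `B` is interpreted as the
two truth values (`Bool`), functional types as full function spaces. -/
def Ty.sem : Ty → Type
  | .base => Bool
  | .arrow σ τ => σ.sem → τ.sem

def Ty.semDefault : (σ : Ty) → σ.sem
  | .base => false
  | .arrow _ τ => fun _ => τ.semDefault

instance (σ : Ty) : Inhabited σ.sem := ⟨σ.semDefault⟩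

noncomputable instance Ty.semFintype : (σ : Ty) → Fintype σ.sem
  | .base => inferInstanceAs (Fintype Bool)
  | .arrow σ τ =>
      letI := Ty.semFintype σ
      letI := Ty.semFintype τ
      letI := Classical.decEq σ.sem
      inferInstanceAs (Fintype (σ.sem → τ.sem))

def Ty.semCast {σ τ : Ty} (h : σ = τ) (v : σ.sem) : τ.sem := h ▸ v

/-- An interpretation assigns to every variable a value of the corresponding type
(the constants `⊥` and `→` have their values fixed). -/
def Interp : Type := ℕ → (σ : Ty) → σ.sem

def Interp.update (I : Interp) (n : ℕ) (σ : Ty) (v : σ.sem) : Interp :=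
  fun m τ => if h : m = n ∧ τ = σ then Ty.semCast h.2.symm v else I m τ

/-- Type inference. -/
def typeOf : Tm → Option Ty
  | .name x => some x.ty
  | .lam _ σ s => (typeOf s).map (Ty.arrow σ)
  | .app s t =>
      match typeOf s, typeOf t with
      | some (.arrow σ τ), some σ' => if σ = σ' then some τ else none
      | _, _ => none

/-- The canonical extension `Î` of an interpretation to all terms: `eval I s σ`
is the value of `s` at type `σ` (on well-typed terms this is the usual
denotation; junk default values are used at type mismatches). -/
def eval (I : Interp) : Tm → (σ : Ty) → σ.sem
  | .name (.var n τ), σ => if h : τ = σ then Ty.semCast h (I n τ) else default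
  | .name .bot, σ =>
      match σ with
      | .base => false
      | _ => default
  | .name .imp, σ =>
      match σ with
      | .arrow .base (.arrow .base .base) => fun a b => !a || b
      | _ => default
  | .app s t, σ =>
      match typeOf t with
      | some τ => eval I s (.arrow τ σ) (eval I t τ)
      | none => default
  | .lam n τ s, σ =>
      match σ with
      | .base => default
      | .arrow σ₁ σ₂ =>
          if h : σ₁ = τ then
            fun a => eval (I.update n τ (Ty.semCast h a)) s σ₂
          else default

/-- `I` satisfies the formula `s` if `Î s = 1`. -/
def Satisfies (I : Interp) (s : Tm) : Prop := eval I s .base = true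

/-- A formula is valid if every interpretation satisfies it. -/
def ValidFml (s : Tm) : Prop := ∀ I : Interp, Satisfies I s

/-- A sequent `A ⇒ s` is valid if every interpretation satisfying `A` satisfies `s`. -/
def ValidSeq (A : Finset Tm) (s : Tm) : Prop :=
  ∀ I : Interp, (∀ t ∈ A, Satisfies I t) → Satisfies I s

/-- Finite disjunction (the empty disjunction is `⊥`). -/
def orList : List Tm → Tm
  | [] => botTm
  | [s] => s
  | s :: l => orTm s (orList l)

/-- Finite conjunction (the empty conjunction is `⊤`). -/
def andList : List Tm → Tm
  | [] => topTm
  | [s] => s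
  | s :: l => andTm s (andList l)

/-- The argument types of a type (every type has the form `σ₁…σₙB`). -/
def Ty.args : Ty → List Ty
  | .base => []
  | .arrow σ τ => σ :: τ.args

/-- Tuples of values along a list of types. -/
def Tup : List Ty → Type
  | [] => PUnit
  | σ :: l => σ.sem × Tup l

noncomputable instance TupFintype : (l : List Ty) → Fintype (Tup l)
  | [] => inferInstanceAs (Fintype PUnit)
  | σ :: l =>
      letI := TupFintype l
      inferInstanceAs (Fintype (σ.sem × Tup l))

/-- Applying a function value to a tuple of arguments (the result type is `B`). -/
def Ty.applyTup : (σ : Ty) → σ.sem → Tup σ.args → Bool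
  | .base, a, _ => a
  | .arrow _ τ, f, p => τ.applyTup (f p.1) p.2

/-- Quote/identity data for each type in a list: a quote function and the term `≐`. -/
def ArgData : List Ty → Type
  | [] => PUnit
  | σ :: l => ((σ.sem → Tm) × Tm) × ArgData l

/-- The conjunction list `x_k ≐_{σ_k} (↓_{σ_k} b_k), …` for a tuple `b`. -/
def eqConj : (l : List Ty) → ArgData l → ℕ → Tup l → List Tm
  | [], _, _, _ => []
  | σ :: l, (d, ds), k, (b, bs) =>
      (.app (.app d.2 (vr k σ)) (d.1 b)) :: eqConj l ds (k + 1) bs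

/-- `λ x_k : σ_k. …` binding one variable for each type in the list. -/
def mkLams : (l : List Ty) → ℕ → Tm → Tm
  | [], _, body => body
  | σ :: l, k, body => .lam k σ (mkLams l (k + 1) body)

/-- The body of the quote term
`↓_{σ₁…σₙB} a := λx₁…xₙ. ⋁_{b₁…bₙ, a b₁…bₙ = 1} ⋀_j x_j ≐_{σ_j} (↓_{σ_j} b_j)`. -/
noncomputable def quoteBodyAux (σ : Ty) (ad : ArgData σ.args) (a : σ.sem) : Tm :=
  mkLams σ.args 0 (orList
    ((((Finset.univ : Finset (Tup σ.args)).toList.filter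
        (fun b => σ.applyTup a b))).map
      (fun b => andList (eqConj σ.args ad 0 b))))

/-- `∀σ := λf. ⋀_{a ∈ Bσ} f (↓σ a)`, given the quote function for `σ`. -/
noncomputable def allTmAux (σ : Ty) (q : σ.sem → Tm) : Tm :=
  .lam 0 (.arrow σ .base)
    (andList (((Finset.univ : Finset σ.sem).toList).map
      (fun a => .app (vr 0 (.arrow σ .base)) (q a))))

mutual
  /-- The quote function `↓σ` together with the identity term `≐σ`. -/
  noncomputable def quoteEq : (σ : Ty) → ((σ.sem → Tm) × Tm)
    | .base =>
        (fun a => quoteBodyAux .base PUnit.unit a,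
         .lam 0 .base (.lam 1 .base (equivTm (vr 0 .base) (vr 1 .base))))
    | .arrow σ τ =>
        (fun a => quoteBodyAux (.arrow σ τ) ((quoteEq σ, argData τ) : ArgData (σ :: τ.args)) a,
         .lam 0 (.arrow σ τ) (.lam 1 (.arrow σ τ)
           (.app (allTmAux σ (quoteEq σ).1)
             (.lam 2 σ
               (.app (.app (quoteEq τ).2
                  (.app (vr 0 (.arrow σ τ)) (vr 2 σ)))
                (.app (vr 1 (.arrow σ τ)) (vr 2 σ)))))))
  /-- Quote/identity data for all argument types of a type. -/
  noncomputable def argData : (σ : Ty) → ArgData σ.args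
    | .base => PUnit.unit
    | .arrow σ τ => ((quoteEq σ, argData τ) : ArgData (σ :: τ.args))
end

/-- The quote function `↓σ : Bσ → Λ`. -/
noncomputable def quote (σ : Ty) (a : σ.sem) : Tm := (quoteEq σ).1 a

/-- The term `≐σ : σσB` denoting the identity predicate on `Bσ`. -/
noncomputable def eqTm (σ : Ty) : Tm := (quoteEq σ).2

/-- The term `∀σ : (σB)B`. -/
noncomputable def allTm (σ : Ty) : Tm := allTmAux σ (quote σ)


/-- Propositional formulas: `s ::= x | ⊥ | s → s` with `x` a variable of type `B`. -/
inductive Propositional : Tm → Prop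
  | var (n : ℕ) : Propositional (vr n .base)
  | bot : Propositional botTm
  | imp {s t} : Propositional s → Propositional t → Propositional (impTm s t)

/-- A type-respecting substitution of terms for variables. -/
def IsSubstitution (ρ : ℕ × Ty → Tm) : Prop := ∀ n σ, HasTy (ρ (n, σ)) σ

/-- A formula is tautologous if it is a substitution instance of a tautology
(a valid propositional formula). -/
def Tautologous (s : Tm) : Prop :=
  ∃ t ρ, Propositional t ∧ ValidFml t ∧ IsSubstitution ρ ∧ s = substAux ρ t

/-- The proof system: Triv, Weak, Ded, MP, DN, Lam and Boolean replacement (BR).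
Sequents consist of a finite set of formulas and a formula. -/
inductive Ded : Finset Tm → Tm → Prop
  | triv {A s} : (∀ t ∈ A, HasTy t .base) → HasTy s .base → Ded (insert s A) s
  | weak {A s t} : HasTy s .base → Ded A t → Ded (insert s A) t
  | ded {A s t} : Ded (insert s A) t → Ded A (impTm s t)
  | mp {A s t} : Ded A (impTm s t) → Ded A s → Ded A t
  | dn {A s} : Ded A (negTm (negTm s)) → Ded A s
  | lam {A s t} : Ded A s → LamEq s t → HasTy t .base → Ded A t
  | br {A s t} (C : Ctx) : C.Admissible A → Ded A (equivTm s t) →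
      Ded A (C.fill s) → HasTy (C.fill t) .base → Ded A (C.fill t)


/-- `Enum_σ`: for every variable `x : σ`, `⊢ ⋁_{a ∈ Bσ} (↓σ a) ≐σ x`. -/
def EnumP (σ : Ty) : Prop :=
  ∀ n : ℕ, Ded ∅ (orList (((Finset.univ : Finset σ.sem).toList).map
    (fun a => Tm.app (Tm.app (eqTm σ) (quote σ a)) (vr n σ))))

/-- `Rep_σ`: replacement with respect to equations `s ≐σ t` in contexts admissible
for the assumptions. -/
def RepP (σ : Ty) : Prop :=
  ∀ (A : Finset Tm) (s t : Tm) (C : Ctx), (∀ u ∈ A, HasTy u .base) →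
    HasTy s σ → HasTy t σ → C.Admissible A →
    Ded A (Tm.app (Tm.app (eqTm σ) s) t) → Ded A (C.fill s) → Ded A (C.fill t)

section Basics

def idSub : ℕ × Ty → Tm := fun p => vr p.1 p.2

def Tm.size : Tm → ℕ
  | .name _ => 1
  | .lam _ _ s => s.size + 1
  | .app s t => s.size + t.size + 1

theorem hasTy_vr {n σ} : HasTy (vr n σ) σ := HasTy.name (.var n σ)

theorem hasTy_unique : ∀ {s σ τ}, HasTy s σ → HasTy s τ → σ = τ := by
  intro s
  induction s with
  | name x => intro σ τ h1 h2; cases h1; cases h2; rfl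
  | lam n υ s ih =>
      intro σ τ h1 h2
      cases h1 with | lam hb1 => ?_
      cases h2 with | lam hb2 => ?_
      rw [ih hb1 hb2]
  | app s t ihs iht =>
      intro σ τ h1 h2
      cases h1 with | app hs1 ht1 => ?_
      cases h2 with | app hs2 ht2 => ?_
      injection ihs hs1 hs2

theorem typeOf_of_hasTy : ∀ {s σ}, HasTy s σ → typeOf s = some σ := by
  intro s σ h
  induction h with
  | name x => rfl
  | lam h ih => simp [typeOf, ih]
  | app hs ht ihs iht => simp [typeOf, ihs, iht]

@[simp] theorem fv_vr {n σ} : fv (vr n σ) = {(n, σ)} := rfl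
@[simp] theorem fv_name_var {n σ} : fv (Tm.name (Name.var n σ)) = {(n, σ)} := rfl
@[simp] theorem fv_bot : fv botTm = ∅ := rfl
@[simp] theorem fv_impName : fv (.name .imp) = ∅ := rfl
@[simp] theorem fv_app {s t} : fv (.app s t) = fv s ∪ fv t := rfl
@[simp] theorem fv_lam {n σ s} : fv (.lam n σ s) = (fv s).erase (n, σ) := rfl
@[simp] theorem fv_imp {s t} : fv (impTm s t) = fv s ∪ fv t := by
  simp [impTm]
@[simp] theorem fv_neg {s} : fv (negTm s) = fv s := by simp [negTm]
@[simp] theorem fv_or {s t} : fv (orTm s t) = fv s ∪ fv t := by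
  ext q; simp only [orTm, fv_imp, Finset.mem_union]; tauto
@[simp] theorem fv_and {s t} : fv (andTm s t) = fv s ∪ fv t := by simp [andTm]
@[simp] theorem fv_equiv {s t} : fv (equivTm s t) = fv s ∪ fv t := by
  ext q; simp only [equivTm, fv_and, fv_imp, Finset.mem_union]; tauto

def freshIdx (ρ : ℕ × Ty → Tm) (n : ℕ) (σ : Ty) (s : Tm) : ℕ :=
  (((fv s).erase (n, σ)).biUnion (fun p => (fv (ρ p)).image Prod.fst)).sup id + 1

@[simp] theorem substAux_vr {ρ n σ} : substAux ρ (vr n σ) = ρ (n, σ) := rfl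
@[simp] theorem substAux_botTm {ρ} : substAux ρ botTm = botTm := rfl
@[simp] theorem substAux_impName {ρ} : substAux ρ (.name .imp) = .name .imp := rfl
@[simp] theorem substAux_app {ρ s t} :
    substAux ρ (.app s t) = .app (substAux ρ s) (substAux ρ t) := rfl
theorem substAux_lam {ρ n σ s} :
    substAux ρ (.lam n σ s) =
      .lam (freshIdx ρ n σ s) σ
        (substAux (Function.update ρ (n, σ) (vr (freshIdx ρ n σ s) σ)) s) := rfl
@[simp] theorem substAux_imp {ρ s t} :
    substAux ρ (impTm s t) = impTm (substAux ρ s) (substAux ρ t) := rfl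
@[simp] theorem substAux_neg {ρ s} : substAux ρ (negTm s) = negTm (substAux ρ s) := rfl
@[simp] theorem substAux_or {ρ s t} :
    substAux ρ (orTm s t) = orTm (substAux ρ s) (substAux ρ t) := rfl
@[simp] theorem substAux_and {ρ s t} :
    substAux ρ (andTm s t) = andTm (substAux ρ s) (substAux ρ t) := rfl
@[simp] theorem substAux_equiv {ρ s t} :
    substAux ρ (equivTm s t) = equivTm (substAux ρ s) (substAux ρ t) := rfl

theorem freshIdx_spec {ρ : ℕ × Ty → Tm} {n σ s} :
    ∀ p ∈ (fv s).erase (n, σ), ∀ q ∈ fv (ρ p), q.1 ≠ freshIdx ρ n σ s := by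
  intro p hp q hq
  have h1 : q.1 ∈ (((fv s).erase (n, σ)).biUnion (fun p => (fv (ρ p)).image Prod.fst)) :=
    Finset.mem_biUnion.2 ⟨p, hp, Finset.mem_image_of_mem _ hq⟩
  have := Finset.le_sup (f := id) h1
  simp only [id] at this
  simp only [freshIdx]; omega

theorem substAux_congr : ∀ (s : Tm) {ρ ρ' : ℕ × Ty → Tm},
    (∀ p ∈ fv s, ρ p = ρ' p) → substAux ρ s = substAux ρ' s := by
  intro s
  induction s with
  | name x =>
      intro ρ ρ' h
      cases x with
      | var n σ => exact h (n, σ) (by simp)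
      | bot => rfl
      | imp => rfl
  | app s t ihs iht =>
      intro ρ ρ' h
      simp only [substAux_app]
      rw [ihs (fun p hp => h p (by simp [hp])), iht (fun p hp => h p (by simp [hp]))]
  | lam n σ s ih =>
      intro ρ ρ' h
      have hbu : ((fv s).erase (n, σ)).biUnion (fun p => (fv (ρ p)).image Prod.fst)
          = ((fv s).erase (n, σ)).biUnion (fun p => (fv (ρ' p)).image Prod.fst) := by
        apply Finset.biUnion_congr rfl
        intro p hp
        rw [h p (by simpa using hp)]
      have hfr : freshIdx ρ n σ s = freshIdx ρ' n σ s := by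
        simp only [freshIdx, hbu]
      simp only [substAux_lam, hfr]
      congr 1
      apply ih
      intro p hp
      by_cases hpn : p = (n, σ)
      · subst hpn; simp
      · rw [Function.update_of_ne hpn, Function.update_of_ne hpn]
        exact h p (by simp [hp, hpn])

theorem substAux_hasTy : ∀ {s σ}, HasTy s σ → ∀ {ρ : ℕ × Ty → Tm},
    (∀ p ∈ fv s, HasTy (ρ p) p.2) → HasTy (substAux ρ s) σ := by
  intro s σ h
  induction h with
  | name x =>
      intro ρ hρ
      cases x with
      | var n σ => exact hρ (n, σ) (by simp)
      | bot => exact HasTy.name _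
      | imp => exact HasTy.name _
  | @lam n σ s τ hs ih =>
      intro ρ hρ
      rw [substAux_lam]
      refine HasTy.lam (ih ?_)
      intro p hp
      by_cases hpn : p = (n, σ)
      · subst hpn; rw [Function.update_self]; exact hasTy_vr
      · rw [Function.update_of_ne hpn]
        exact hρ p (by simp [hp, hpn])
  | app hs ht ihs iht =>
      intro ρ hρ
      exact HasTy.app (ihs (fun p hp => hρ p (by simp [hp])))
        (iht (fun p hp => hρ p (by simp [hp])))

theorem fv_substAux : ∀ (s : Tm) (ρ : ℕ × Ty → Tm),
    fv (substAux ρ s) ⊆ (fv s).biUnion (fun p => fv (ρ p)) := by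
  intro s
  induction s with
  | name x =>
      intro ρ
      cases x with
      | var n σ => intro q hq; exact Finset.mem_biUnion.2 ⟨(n, σ), by simp, hq⟩
      | bot => intro q hq; exact absurd hq (Finset.notMem_empty q)
      | imp => intro q hq; exact absurd hq (Finset.notMem_empty q)
  | app s t ihs iht =>
      intro ρ q hq
      simp only [substAux_app, fv_app, Finset.mem_union] at hq
      rcases hq with hq | hq
      · rcases Finset.mem_biUnion.1 (ihs ρ hq) with ⟨p, hp, hq⟩
        exact Finset.mem_biUnion.2 ⟨p, by simp [hp], hq⟩
      · rcases Finset.mem_biUnion.1 (iht ρ hq) with ⟨p, hp, hq⟩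
        exact Finset.mem_biUnion.2 ⟨p, by simp [hp], hq⟩
  | lam n σ s ih =>
      intro ρ q hq
      rw [substAux_lam] at hq
      simp only [fv_lam, Finset.mem_erase] at hq
      rcases hq with ⟨hqm, hq⟩
      rcases Finset.mem_biUnion.1 (ih _ hq) with ⟨p, hp, hq'⟩
      by_cases hpn : p = (n, σ)
      · subst hpn
        rw [Function.update_self] at hq'
        rw [fv_vr, Finset.mem_singleton] at hq'
        exact absurd hq' hqm
      · rw [Function.update_of_ne hpn] at hq'
        exact Finset.mem_biUnion.2 ⟨p, by simp [hp, hpn], hq'⟩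

theorem substAux_closed_fv {s : Tm} {ρ : ℕ × Ty → Tm}
    (h : ∀ p ∈ fv s, fv (ρ p) = ∅) : fv (substAux ρ s) = ∅ := by
  apply Finset.eq_empty_of_forall_notMem
  intro q hq
  rcases Finset.mem_biUnion.1 (fv_substAux s ρ hq) with ⟨p, hp, hq'⟩
  rw [h p hp] at hq'
  exact absurd hq' (Finset.notMem_empty q)

theorem size_substAux_vr : ∀ (s : Tm) {ρ : ℕ × Ty → Tm},
    (∀ p ∈ fv s, ∃ q : ℕ × Ty, ρ p = vr q.1 q.2) → (substAux ρ s).size = s.size := by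
  intro s
  induction s with
  | name x =>
      intro ρ h
      cases x with
      | var n σ =>
          rcases h (n, σ) (by simp) with ⟨q, hq⟩
          rw [show substAux ρ (Tm.name (Name.var n σ)) = ρ (n, σ) from rfl, hq]
          rfl
      | bot => rfl
      | imp => rfl
  | app s t ihs iht =>
      intro ρ h
      simp only [substAux_app, Tm.size]
      rw [ihs (fun p hp => h p (by simp [hp])), iht (fun p hp => h p (by simp [hp]))]
  | lam n σ s ih =>
      intro ρ h
      rw [substAux_lam]
      simp only [Tm.size]
      rw [ih]
      intro p hp
      by_cases hpn : p = (n, σ)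
      · subst hpn; exact ⟨(freshIdx ρ n σ s, σ), by simp⟩
      · rw [Function.update_of_ne hpn]
        exact h p (by simp [hp, hpn])

theorem fill_hasTy_exists : ∀ (C : Ctx) {s τ}, HasTy (C.fill s) τ → ∃ σ, HasTy s σ := by
  intro C
  induction C with
  | hole => intro s τ h; exact ⟨τ, h⟩
  | lam n σ C ih => intro s τ h; cases h with | lam hb => exact ih hb
  | appL C t ih => intro s τ h; cases h with | app h1 h2 => exact ih h1
  | appR t C ih => intro s τ h; cases h with | app h1 h2 => exact ih h2

theorem fill_hasTy_replace : ∀ (C : Ctx) {s t σ τ},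
    HasTy (C.fill s) τ → HasTy s σ → HasTy t σ → HasTy (C.fill t) τ := by
  intro C
  induction C with
  | hole =>
      intro s t σ τ h hs ht
      have := hasTy_unique h hs; subst this; exact ht
  | lam n σ' C ih =>
      intro s t σ τ h hs ht
      cases h with | lam hb => exact HasTy.lam (ih hb hs ht)
  | appL C u ih =>
      intro s t σ τ h hs ht
      cases h with | app h1 h2 => exact HasTy.app (ih h1 hs ht) h2
  | appR u C ih =>
      intro s t σ τ h hs ht
      cases h with | app h1 h2 => exact HasTy.app h1 (ih h2 hs ht)

theorem hasTy_imp {s t} (hs : HasTy s .base) (ht : HasTy t .base) :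
    HasTy (impTm s t) .base :=
  HasTy.app (HasTy.app (HasTy.name .imp) hs) ht

theorem hasTy_imp_iff {s t} : HasTy (impTm s t) .base ↔ HasTy s .base ∧ HasTy t .base := by
  constructor
  · intro h
    cases h with | app h1 h2 => ?_
    cases h1 with | app h3 h4 => ?_
    rename_i σ σ'
    have he : Ty.arrow .base (.arrow .base .base) = Ty.arrow σ' (Ty.arrow σ .base) :=
      hasTy_unique (HasTy.name .imp) h3
    injection he with he1 he2
    injection he2 with he3 he4
    subst he1; subst he3
    exact ⟨h4, h2⟩
  · rintro ⟨hs, ht⟩; exact hasTy_imp hs ht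

end Basics
section DB

inductive DTm : Type
  | bvar : ℕ → DTm
  | fvar : ℕ × Ty → DTm
  | dbot : DTm
  | dimp : DTm
  | dlam : Ty → DTm → DTm
  | dapp : DTm → DTm → DTm
deriving DecidableEq

def db : Tm → (ℕ × Ty → Option ℕ) → ℕ → DTm
  | .name (.var n σ), e, d =>
      match e (n, σ) with
      | some k => .bvar (d - k - 1)
      | none => .fvar (n, σ)
  | .name .bot, _, _ => .dbot
  | .name .imp, _, _ => .dimp
  | .app s t, e, d => .dapp (db s e d) (db t e d)
  | .lam n σ s, e, d => .dlam σ (db s (Function.update e (n, σ) (some d)) (d + 1))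

def db0 (s : Tm) : DTm := db s (fun _ => none) 0

@[simp] theorem db_var {n σ e d} : db (.name (.var n σ)) e d =
    (match e (n, σ) with
      | some k => .bvar (d - k - 1)
      | none => .fvar (n, σ)) := rfl
@[simp] theorem db_bot {e d} : db (.name .bot) e d = .dbot := rfl
@[simp] theorem db_imp {e d} : db (.name .imp) e d = .dimp := rfl
@[simp] theorem db_app {s t e d} : db (.app s t) e d = .dapp (db s e d) (db t e d) := rfl
@[simp] theorem db_lam {n σ s e d} :
    db (.lam n σ s) e d = .dlam σ (db s (Function.update e (n, σ) (some d)) (d + 1)) := rfl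

def dsubst : DTm → (ℕ × Ty → DTm) → DTm
  | .bvar k, _ => .bvar k
  | .fvar p, f => f p
  | .dbot, _ => .dbot
  | .dimp, _ => .dimp
  | .dlam σ b, f => .dlam σ (dsubst b f)
  | .dapp s t, f => .dapp (dsubst s f) (dsubst t f)

theorem db_congr : ∀ (s : Tm) {e e' : ℕ × Ty → Option ℕ} {d d' : ℕ},
    (∀ p ∈ fv s, (e p = none ∧ e' p = none) ∨
      (∃ k k', e p = some k ∧ e' p = some k' ∧ k < d ∧ k' < d' ∧ d - k = d' - k')) →
    db s e d = db s e' d' := by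
  intro s
  induction s with
  | name x =>
      intro e e' d d' h
      cases x with
      | var n σ =>
          rcases h (n, σ) (by simp) with ⟨h1, h2⟩ | ⟨k, k', h1, h2, h3, h4, h5⟩
          · simp [h1, h2]
          · simp [h1, h2]; omega
      | bot => rfl
      | imp => rfl
  | app s t ihs iht =>
      intro e e' d d' h
      simp only [db_app]
      rw [ihs (fun p hp => h p (by simp [hp])), iht (fun p hp => h p (by simp [hp]))]
  | lam n σ s ih =>
      intro e e' d d' h
      simp only [db_lam]
      congr 1
      apply ih
      intro p hp
      by_cases hpn : p = (n, σ)
      · subst hpn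
        right; exact ⟨d, d', by simp, by simp, by omega, by omega, by omega⟩
      · rw [Function.update_of_ne hpn, Function.update_of_ne hpn]
        rcases h p (by simp [hp, hpn]) with ⟨h1, h2⟩ | ⟨k, k', h1, h2, h3, h4, h5⟩
        · left; exact ⟨h1, h2⟩
        · right; exact ⟨k, k', h1, h2, by omega, by omega, by omega⟩

theorem db_env_irrel {s : Tm} {e : ℕ × Ty → Option ℕ} {d : ℕ}
    (h : ∀ p ∈ fv s, e p = none) : db s e d = db0 s :=
  db_congr s (fun p hp => Or.inl ⟨h p hp, rfl⟩)

theorem dsubst_congr_db : ∀ (s : Tm) {e : ℕ × Ty → Option ℕ} {d : ℕ} {f g : ℕ × Ty → DTm},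
    (∀ p ∈ fv s, e p = none → f p = g p) →
    dsubst (db s e d) f = dsubst (db s e d) g := by
  intro s
  induction s with
  | name x =>
      intro e d f g h
      cases x with
      | var n σ =>
          rcases he : e (n, σ) with _ | k
          · simpa [dsubst, he] using h (n, σ) (by simp) he
          · simp [dsubst, he]
      | bot => rfl
      | imp => rfl
  | app s t ihs iht =>
      intro e d f g h
      simp only [db_app, dsubst]
      rw [ihs (fun p hp hn => h p (by simp [hp]) hn), iht (fun p hp hn => h p (by simp [hp]) hn)]
  | lam n σ s ih =>
      intro e d f g h
      simp only [db_lam, dsubst]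
      congr 1
      apply ih
      intro p hp hn
      by_cases hpn : p = (n, σ)
      · subst hpn; rw [Function.update_self] at hn; exact absurd hn (by simp)
      · rw [Function.update_of_ne hpn] at hn
        exact h p (by simp [hp, hpn]) hn

theorem dsubst_fvar : ∀ (D : DTm), dsubst D (fun p => .fvar p) = D := by
  intro D
  induction D with
  | bvar k => rfl
  | fvar p => rfl
  | dbot => rfl
  | dimp => rfl
  | dlam σ b ih => simp [dsubst, ih]
  | dapp s t ihs iht => simp [dsubst, ihs, iht]

theorem dsubst_db_self {s : Tm} {e : ℕ × Ty → Option ℕ} {d : ℕ} {f : ℕ × Ty → DTm}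
    (h : ∀ p ∈ fv s, e p = none → f p = .fvar p) :
    dsubst (db s e d) f = db s e d := by
  rw [dsubst_congr_db s (g := fun p => .fvar p) h, dsubst_fvar]

theorem dsubst_comp : ∀ (D : DTm) (f g : ℕ × Ty → DTm),
    dsubst (dsubst D f) g = dsubst D (fun p => dsubst (f p) g) := by
  intro D f g
  induction D with
  | bvar k => rfl
  | fvar p => rfl
  | dbot => rfl
  | dimp => rfl
  | dlam σ b ih => simp [dsubst, ih]
  | dapp s t ihs iht => simp [dsubst, ihs, iht]

theorem db_substAux : ∀ (s : Tm) {ρ : ℕ × Ty → Tm} {e e' : ℕ × Ty → Option ℕ} {d : ℕ},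
    (∀ p ∈ fv s,
      (∃ k, e' p = some k ∧ ∃ m, ρ p = vr m p.2 ∧ e (m, p.2) = some k) ∨
      (e' p = none ∧ ∀ q ∈ fv (ρ p), e q = none)) →
    db (substAux ρ s) e d = dsubst (db s e' d) (fun p => db0 (ρ p)) := by
  intro s
  induction s with
  | name x =>
      intro ρ e e' d h
      cases x with
      | var n σ =>
          rcases h (n, σ) (by simp) with ⟨k, he', m, hρ, he⟩ | ⟨he', hq⟩
          · rw [show substAux ρ (Tm.name (Name.var n σ)) = ρ (n, σ) from rfl, hρ]
            simp [dsubst, he', he, vr]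
          · rw [show substAux ρ (Tm.name (Name.var n σ)) = ρ (n, σ) from rfl]
            simp [dsubst, he']
            exact db_env_irrel hq
      | bot => rfl
      | imp => rfl
  | app s t ihs iht =>
      intro ρ e e' d h
      simp only [substAux_app, db_app, dsubst]
      rw [ihs (fun p hp => h p (by simp [hp])), iht (fun p hp => h p (by simp [hp]))]
  | lam n σ s ih =>
      intro ρ e e' d h
      rw [substAux_lam]
      simp only [db_lam, dsubst]
      congr 1
      rw [ih (e := Function.update e (freshIdx ρ n σ s, σ) (some d))
          (e' := Function.update e' (n, σ) (some d))]
      · apply dsubst_congr_db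
        intro p hp hn
        by_cases hpn : p = (n, σ)
        · subst hpn; rw [Function.update_self] at hn; exact absurd hn (by simp)
        · rw [Function.update_of_ne hpn]
      · intro p hp
        by_cases hpn : p = (n, σ)
        · subst hpn
          left
          refine ⟨d, by simp, freshIdx ρ n σ s, by simp, by simp⟩
        · have hpe : p ∈ (fv s).erase (n, σ) := Finset.mem_erase.2 ⟨hpn, hp⟩
          rcases h p (by simpa using hpe) with ⟨k, he', m, hρ, he⟩ | ⟨he', hq⟩
          · left
            refine ⟨k, by rw [Function.update_of_ne hpn]; exact he', m, ?_, ?_⟩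
            · rw [Function.update_of_ne hpn]; exact hρ
            · have hm : (m, p.2) ∈ fv (ρ p) := by rw [hρ]; simp
              have hne : (m, p.2) ≠ (freshIdx ρ n σ s, σ) := by
                intro hc
                have := freshIdx_spec p hpe _ hm
                exact this (congrArg Prod.fst hc)
              rw [Function.update_of_ne hne]; exact he
          · right
            refine ⟨by rw [Function.update_of_ne hpn]; exact he', ?_⟩
            intro q hq'
            rw [Function.update_of_ne hpn] at hq'
            have hne : q ≠ (freshIdx ρ n σ s, σ) := by
              intro hc
              exact freshIdx_spec p hpe q hq' (congrArg Prod.fst hc)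
            rw [Function.update_of_ne hne]
            exact hq q hq'

theorem db0_substAux (s : Tm) (ρ : ℕ × Ty → Tm) :
    db0 (substAux ρ s) = dsubst (db0 s) (fun p => db0 (ρ p)) :=
  db_substAux s (fun p _ => Or.inr ⟨rfl, fun _ _ => rfl⟩)

@[simp] theorem db0_vr {n σ} : db0 (vr n σ) = .fvar (n, σ) := rfl

theorem db0_substAux_id {s : Tm} {ρ : ℕ × Ty → Tm} (h : ∀ p ∈ fv s, ρ p = vr p.1 p.2) :
    db0 (substAux ρ s) = db0 s := by
  rw [db0_substAux]
  apply dsubst_db_self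
  intro p hp _
  rw [h p hp]; rfl

theorem db0_comp (s : Tm) (ρ θ : ℕ × Ty → Tm) :
    db0 (substAux θ (substAux ρ s)) = db0 (substAux (fun p => substAux θ (ρ p)) s) := by
  rw [db0_substAux, db0_substAux, dsubst_comp, db0_substAux]
  congr 1
  funext p
  rw [db0_substAux]

theorem db0_subst_pointwise {s : Tm} {ρ ρ' : ℕ × Ty → Tm}
    (h : ∀ p ∈ fv s, db0 (ρ p) = db0 (ρ' p)) :
    db0 (substAux ρ s) = db0 (substAux ρ' s) := by
  rw [db0_substAux, db0_substAux]
  exact dsubst_congr_db s (fun p hp _ => h p hp)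

def fvD : DTm → Finset (ℕ × Ty)
  | .bvar _ => ∅
  | .fvar p => {p}
  | .dbot => ∅
  | .dimp => ∅
  | .dlam _ b => fvD b
  | .dapp s t => fvD s ∪ fvD t

theorem fvD_db : ∀ (s : Tm) {e d p}, p ∈ fvD (db s e d) → p ∈ fv s ∧ e p = none := by
  intro s
  induction s with
  | name x =>
      intro e d p hp
      cases x with
      | var n σ =>
          rcases he : e (n, σ) with _ | k
          · simp only [db_var, he, fvD, Finset.mem_singleton] at hp
            subst hp; exact ⟨by simp, he⟩
          · simp only [db_var, he, fvD] at hp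
            exact absurd hp (Finset.notMem_empty p)
      | bot => exact absurd hp (Finset.notMem_empty p)
      | imp => exact absurd hp (Finset.notMem_empty p)
  | app s t ihs iht =>
      intro e d p hp
      simp only [db_app, fvD, Finset.mem_union] at hp
      rcases hp with hp | hp
      · rcases ihs hp with ⟨h1, h2⟩; exact ⟨by simp [h1], h2⟩
      · rcases iht hp with ⟨h1, h2⟩; exact ⟨by simp [h1], h2⟩
  | lam n σ s ih =>
      intro e d p hp
      simp only [db_lam, fvD] at hp
      rcases ih hp with ⟨h1, h2⟩
      by_cases hpn : p = (n, σ)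
      · subst hpn; rw [Function.update_self] at h2; exact absurd h2 (by simp)
      · rw [Function.update_of_ne hpn] at h2
        exact ⟨by simp [h1, hpn], h2⟩

def closeD : DTm → ℕ × Ty → ℕ → DTm
  | .bvar k, _, _ => .bvar k
  | .fvar q, p, i => if q = p then .bvar i else .fvar q
  | .dbot, _, _ => .dbot
  | .dimp, _, _ => .dimp
  | .dlam σ b, p, i => .dlam σ (closeD b p (i + 1))
  | .dapp s t, p, i => .dapp (closeD s p i) (closeD t p i)

def openD : DTm → ℕ × Ty → ℕ → DTm
  | .bvar k, q, i => if k = i then .fvar q else .bvar k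
  | .fvar r, _, _ => .fvar r
  | .dbot, _, _ => .dbot
  | .dimp, _, _ => .dimp
  | .dlam σ b, q, i => .dlam σ (openD b q (i + 1))
  | .dapp s t, q, i => .dapp (openD s q i) (openD t q i)

def ClosedAt : DTm → ℕ → Prop
  | .bvar k, c => k < c
  | .fvar _, _ => True
  | .dbot, _ => True
  | .dimp, _ => True
  | .dlam _ b, c => ClosedAt b (c + 1)
  | .dapp s t, c => ClosedAt s c ∧ ClosedAt t c

theorem closedAt_db : ∀ (s : Tm) {e d c},
    (∀ p k, p ∈ fv s → e p = some k → d - k - 1 < c) → ClosedAt (db s e d) c := by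
  intro s
  induction s with
  | name x =>
      intro e d c h
      cases x with
      | var n σ =>
          rcases he : e (n, σ) with _ | k
          · simp only [db_var, he]; trivial
          · simp only [db_var, he]
            exact h (n, σ) k (by simp) he
      | bot => trivial
      | imp => trivial
  | app s t ihs iht =>
      intro e d c h
      exact ⟨ihs (fun p k hp => h p k (by simp [hp])), iht (fun p k hp => h p k (by simp [hp]))⟩
  | lam n σ s ih =>
      intro e d c h
      simp only [db_lam]
      show ClosedAt _ (c + 1)
      apply ih
      intro p k hp he
      by_cases hpn : p = (n, σ)
      · subst hpn; rw [Function.update_self] at he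
        injection he with he; omega
      · rw [Function.update_of_ne hpn] at he
        have := h p k (by simp [hp, hpn]) he
        omega

theorem closedAt_db0 (s : Tm) : ClosedAt (db0 s) 0 :=
  closedAt_db s (fun p k _ h => by simp at h)

theorem openD_closeD : ∀ (D : DTm) (p q : ℕ × Ty) (i : ℕ), ClosedAt D i →
    openD (closeD D p i) q i = dsubst D (Function.update (fun r => .fvar r) p (.fvar q)) := by
  intro D
  induction D with
  | bvar k =>
      intro p q i hc
      simp only [closeD, openD, dsubst]
      rw [if_neg (by simp [ClosedAt] at hc; omega)]
  | fvar r =>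
      intro p q i hc
      by_cases hr : r = p
      · subst hr; simp [closeD, openD, dsubst]
      · simp [closeD, openD, dsubst, hr, Function.update_of_ne hr]
  | dbot => intros; rfl
  | dimp => intros; rfl
  | dlam σ b ih =>
      intro p q i hc
      simp only [closeD, openD, dsubst]
      rw [ih p q (i + 1) hc]
  | dapp s t ihs iht =>
      intro p q i hc
      simp only [closeD, openD, dsubst]
      rw [ihs p q i hc.1, iht p q i hc.2]

theorem closeD_not_mem : ∀ (D : DTm) {p : ℕ × Ty} (i : ℕ), p ∉ fvD D → closeD D p i = D := by
  intro D
  induction D with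
  | bvar k => intros; rfl
  | fvar r =>
      intro p i hp
      simp only [fvD, Finset.mem_singleton] at hp
      simp only [closeD]
      rw [if_neg (fun h => hp h.symm)]
  | dbot => intros; rfl
  | dimp => intros; rfl
  | dlam σ b ih =>
      intro p i hp
      simp only [closeD]
      rw [ih (i + 1) hp]
  | dapp s t ihs iht =>
      intro p i hp
      simp only [fvD, Finset.mem_union, not_or] at hp
      simp only [closeD]
      rw [ihs i hp.1, iht i hp.2]

theorem db_close : ∀ (s : Tm) {e : ℕ × Ty → Option ℕ} {d n σ k},
    e (n, σ) = none → k < d →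
    db s (Function.update e (n, σ) (some k)) d = closeD (db s e d) (n, σ) (d - k - 1) := by
  intro s
  induction s with
  | name x =>
      intro e d n σ k he hk
      cases x with
      | var n' σ' =>
          by_cases hp : ((n' : ℕ), σ') = (n, σ)
          · injection hp with h1 h2
            subst h1; subst h2
            simp [db_var, Function.update_self, he, closeD]
          · simp only [db_var, Function.update_of_ne hp]
            rcases he' : e (n', σ') with _ | j
            · simp [closeD, hp]
            · simp [closeD]
      | bot => intros; rfl
      | imp => intros; rfl
  | app s t ihs iht =>
      intro e d n σ k he hk
      simp only [db_app, closeD]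
      rw [ihs he hk, iht he hk]
  | lam m τ s ih =>
      intro e d n σ k he hk
      simp only [db_lam, closeD]
      by_cases hmn : ((m : ℕ), τ) = (n, σ)
      · rw [hmn]
        rw [Function.update_idem]
        congr 1
        have hnofv : (n, σ) ∉ fvD (db s (Function.update e (n, σ) (some d)) (d + 1)) := by
          intro hc
          rcases fvD_db s hc with ⟨_, h2⟩
          rw [Function.update_self] at h2
          exact absurd h2 (by simp)
        rw [closeD_not_mem _ _ hnofv]
      · have hcm : ((n : ℕ), σ) ≠ (m, τ) := fun h => hmn h.symm
        have harith : d + 1 - k - 1 = (d - k - 1) + 1 := by omega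
        rw [Function.update_comm hcm,
          ih (e := Function.update e (m, τ) (some d))
            (by rw [Function.update_of_ne hcm]; exact he) (by omega), harith]

theorem db_shift_one {s : Tm} {n σ} :
    db s (Function.update (fun _ => none) (n, σ) (some 0)) 1 =
      closeD (db0 s) (n, σ) 0 := by
  have h1 : db s (Function.update (fun _ => none) (n, σ) (some 0)) 1 =
      closeD (db s (fun _ => none) 1) (n, σ) 0 := by
    have := db_close s (e := fun _ => none) (d := 1) (n := n) (σ := σ) (k := 0) rfl (by omega)
    simpa using this
  rw [h1]
  congr 1
  exact db_congr s (fun p _ => Or.inl ⟨rfl, rfl⟩)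

end DB
section DBTy

def dTypeOf : DTm → List Ty → Option Ty
  | .bvar k, L => L[k]?
  | .fvar p, _ => some p.2
  | .dbot, _ => some .base
  | .dimp, _ => some (.arrow .base (.arrow .base .base))
  | .dlam σ b, L => (dTypeOf b (σ :: L)).map (Ty.arrow σ)
  | .dapp s t, L =>
      match dTypeOf s L, dTypeOf t L with
      | some (.arrow σ τ), some σ' => if σ = σ' then some τ else none
      | _, _ => none

theorem dTypeOf_db : ∀ {s σ}, HasTy s σ → ∀ {e : ℕ × Ty → Option ℕ} {d : ℕ} {L : List Ty},
    (∀ p k, e p = some k → k < d ∧ L[(d - k - 1)]? = some p.2) →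
    dTypeOf (db s e d) L = some σ := by
  intro s σ hty
  induction hty with
  | name x =>
      intro e d L h
      cases x with
      | var n σ =>
          rcases he : e (n, σ) with _ | k
          · simp [db_var, he, dTypeOf, Name.ty]
          · simp only [db_var, he, dTypeOf]
            exact (h (n, σ) k he).2
      | bot => rfl
      | imp => rfl
  | @lam n σ₀ b τ hb ih =>
      intro e d L h
      simp only [db_lam, dTypeOf]
      rw [ih (L := σ₀ :: L)]
      · rfl
      · intro p k he
        by_cases hpn : p = (n, σ₀)
        · subst hpn; rw [Function.update_self] at he
          injection he with he; subst he
          constructor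
          · omega
          · simp [show d + 1 - d - 1 = 0 from by omega]
        · rw [Function.update_of_ne hpn] at he
          rcases h p k he with ⟨h1, h2⟩
          constructor
          · omega
          · rw [show d + 1 - k - 1 = (d - k - 1) + 1 from by omega]
            simpa using h2
  | @app s t σ₀ τ hs ht ihs iht =>
      intro e d L h
      simp only [db_app, dTypeOf, ihs h, iht h]
      simp

theorem size_pos : ∀ (s : Tm), 0 < s.size := by
  intro s; cases s <;> simp [Tm.size] <;> omega

theorem fresh_not_mem {S : Finset (ℕ × Ty)} {σ : Ty} : (S.sup Prod.fst + 1, σ) ∉ S := by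
  intro h
  have := Finset.le_sup (f := Prod.fst) h
  simp only at this
  omega

theorem lamEq_of_db0_aux : ∀ (N : ℕ) (s t : Tm) (σ : Ty), s.size ≤ N → HasTy s σ →
    HasTy t σ → db0 s = db0 t → LamEq s t := by
  intro N
  induction N with
  | zero => intro s t σ h; exact absurd h (by have := size_pos s; omega)
  | succ N IH =>
      intro s t σ hsize hs ht h
      cases s with
      | name x =>
          cases t with
          | name y =>
              cases x with
              | var n σ' =>
                  cases y with
                  | var n' σ'' =>
                      simp only [db0, db_var] at h
                      injection h with h
                      injection h with h1 h2
                      subst h1; subst h2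
                      exact LamEq.refl hs
                  | bot => simp [db0] at h
                  | imp => simp [db0] at h
              | bot =>
                  cases y with
                  | var n' σ'' => simp [db0] at h
                  | bot => exact LamEq.refl hs
                  | imp => simp [db0] at h
              | imp =>
                  cases y with
                  | var n' σ'' => simp [db0] at h
                  | bot => simp [db0] at h
                  | imp => exact LamEq.refl hs
          | lam n' σ'' t1 => cases x <;> simp [db0] at h
          | app t1 t2 => cases x <;> simp [db0] at h
      | app s1 s2 =>
          cases t with
          | name y => cases y <;> simp [db0] at h
          | lam n' σ'' t1 => simp [db0] at h
          | app t1 t2 =>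
              simp only [db0, db_app] at h
              injection h with h1 h2
              cases hs with | app hs1 hs2 => ?_
              cases ht with | app ht1 ht2 => ?_
              rename_i υ υ'
              have e1 : dTypeOf (db0 s2) [] = some υ :=
                dTypeOf_db hs2 (fun p k he => by simp at he)
              have e2 : dTypeOf (db0 t2) [] = some υ' :=
                dTypeOf_db ht2 (fun p k he => by simp at he)
              rw [show db0 s2 = db0 t2 from h2, e2] at e1
              injection e1 with e1
              subst e1
              have i1 : LamEq s1 t1 := IH s1 t1 _ (by simp [Tm.size] at hsize ⊢; omega) hs1 ht1 h1
              have i2 : LamEq s2 t2 := IH s2 t2 _ (by simp [Tm.size] at hsize ⊢; omega) hs2 ht2 h2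
              have c1 : LamEq (.app s1 s2) (.app t1 s2) :=
                LamEq.ctx (Ctx.appL Ctx.hole s2) i1 (HasTy.app hs1 hs2)
              have c2 : LamEq (.app t1 s2) (.app t1 t2) :=
                LamEq.ctx (Ctx.appR t1 Ctx.hole) i2 (HasTy.app ht1 hs2)
              exact LamEq.trans c1 c2
      | lam n σ₀ s1 =>
          cases t with
          | name y => cases y <;> simp [db0] at h
          | app t1 t2 => simp [db0] at h
          | lam n' σ₀' t1 =>
              simp only [db0, db_lam] at h
              injection h with hσ hbody
              subst hσ
              cases hs with | lam hb1 => ?_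
              rename_i τ1
              cases ht with | lam hb2 => ?_
              set m : ℕ := ((fv s1 ∪ fv t1).sup Prod.fst) + 1 with hm
              have hm1 : (m, σ₀) ∉ fv s1 := by
                intro hc
                exact fresh_not_mem (S := fv s1 ∪ fv t1) (σ := σ₀) (Finset.mem_union_left _ hc)
              have hm2 : (m, σ₀) ∉ fv t1 := by
                intro hc
                exact fresh_not_mem (S := fv s1 ∪ fv t1) (σ := σ₀) (Finset.mem_union_right _ hc)
              have hvt : ∀ (k : ℕ) (τ' : Ty) (u : Tm), (∀ p ∈ fv u, HasTy
                  ((Function.update (fun p => vr p.1 p.2) (k, τ') (vr m τ')) p) p.2) := by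
                intro k τ' u p _
                by_cases hpk : p = (k, τ')
                · subst hpk; rw [Function.update_self]; exact hasTy_vr
                · rw [Function.update_of_ne hpk]; exact hasTy_vr
              have hty1 : HasTy (subst s1 n σ₀ (vr m σ₀)) τ1 :=
                substAux_hasTy hb1 (hvt n σ₀ s1)
              have hty2 : HasTy (subst t1 n' σ₀ (vr m σ₀)) τ1 :=
                substAux_hasTy hb2 (hvt n' σ₀ t1)
              have hdbsub : ∀ (k : ℕ) (u : Tm),
                  db0 (subst u k σ₀ (vr m σ₀)) =
                    openD (closeD (db0 u) (k, σ₀) 0) (m, σ₀) 0 := by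
                intro k u
                rw [openD_closeD _ _ _ _ (closedAt_db0 u)]
                rw [show subst u k σ₀ (vr m σ₀) =
                  substAux (Function.update (fun p => vr p.1 p.2) (k, σ₀) (vr m σ₀)) u from rfl]
                rw [db0_substAux]
                congr 1
                funext p
                by_cases hpk : p = (k, σ₀)
                · subst hpk; rw [Function.update_self, Function.update_self]; rfl
                · rw [Function.update_of_ne hpk, Function.update_of_ne hpk]; rfl
              have hdb : db0 (subst s1 n σ₀ (vr m σ₀)) = db0 (subst t1 n' σ₀ (vr m σ₀)) := by
                rw [hdbsub n s1, hdbsub n' t1]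
                rw [← db_shift_one, ← db_shift_one, hbody]
              have hsz : (subst s1 n σ₀ (vr m σ₀)).size ≤ N := by
                have : (subst s1 n σ₀ (vr m σ₀)).size = s1.size := by
                  apply size_substAux_vr
                  intro p _
                  by_cases hpk : p = (n, σ₀)
                  · subst hpk; rw [Function.update_self]; exact ⟨(m, σ₀), rfl⟩
                  · rw [Function.update_of_ne hpk]; exact ⟨p, rfl⟩
                simp only [Tm.size] at hsize
                omega
              have inner : LamEq (subst s1 n σ₀ (vr m σ₀)) (subst t1 n' σ₀ (vr m σ₀)) :=
                IH _ _ τ1 hsz hty1 hty2 hdb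
              have a1 : LamEq (.lam n σ₀ s1) (.lam m σ₀ (subst s1 n σ₀ (vr m σ₀))) :=
                LamEq.alpha (HasTy.lam hb1) hm1
              have a2 : LamEq (.lam n' σ₀ t1) (.lam m σ₀ (subst t1 n' σ₀ (vr m σ₀))) :=
                LamEq.alpha (HasTy.lam hb2) hm2
              have cmid : LamEq (.lam m σ₀ (subst s1 n σ₀ (vr m σ₀)))
                  (.lam m σ₀ (subst t1 n' σ₀ (vr m σ₀))) :=
                LamEq.ctx (Ctx.lam m σ₀ Ctx.hole) inner (HasTy.lam hty1)
              exact LamEq.trans a1 (LamEq.trans cmid (LamEq.symm a2))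

theorem lamEq_of_db0 {s t : Tm} {σ : Ty} (hs : HasTy s σ) (ht : HasTy t σ)
    (h : db0 s = db0 t) : LamEq s t :=
  lamEq_of_db0_aux s.size s t σ le_rfl hs ht h

end DBTy
section LamEqUtil

theorem subst_hasTy {b : Tm} {τ : Ty} (hb : HasTy b τ) {n : ℕ} {σ : Ty} {u : Tm}
    (hu : HasTy u σ) : HasTy (subst b n σ u) τ := by
  apply substAux_hasTy hb
  intro p _
  by_cases hpn : p = (n, σ)
  · subst hpn; rw [Function.update_self]; exact hu
  · rw [Function.update_of_ne hpn]; exact hasTy_vr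

theorem lamEq_hasTy_iff : ∀ {s t : Tm}, LamEq s t → ∀ {σ : Ty}, (HasTy s σ ↔ HasTy t σ) := by
  intro s t h
  induction h with
  | refl h => intro σ; exact Iff.rfl
  | symm h ih => intro σ; exact (ih).symm
  | trans h1 h2 ih1 ih2 => intro σ; exact (ih1).trans ih2
  | @alpha n m σ₀ b τ h hm =>
      intro σ
      constructor
      · intro hs
        cases hs with | lam hb => exact HasTy.lam (subst_hasTy hb hasTy_vr)
      · intro hs
        cases hs with | lam hb' => ?_
        rename_i τ₀
        cases h with | lam hb => ?_
        rename_i τb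
        have : HasTy (subst b n σ₀ (vr m σ₀)) τb := subst_hasTy hb hasTy_vr
        have heq : τ₀ = τb := hasTy_unique hb' this
        subst heq
        exact HasTy.lam hb
  | @beta n σ₀ b u τ h =>
      intro σ
      constructor
      · intro hs
        cases hs with | app h1 h2 => ?_
        cases h1 with | lam hb => ?_
        exact subst_hasTy hb h2
      · intro hs
        cases h with | app h1 h2 => ?_
        cases h1 with | lam hb => ?_
        have : HasTy (subst b n σ₀ u) τ := subst_hasTy hb h2
        have heq : σ = τ := hasTy_unique hs this
        subst heq
        exact HasTy.app (HasTy.lam hb) h2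
  | @eta n σ₀ u τ h hn =>
      intro σ
      constructor
      · intro hs
        cases hs with | lam hb => ?_
        cases hb with | app h1 h2 => ?_
        have : σ₀ = _ := hasTy_unique hasTy_vr h2
        subst this
        exact h1
      · intro hs
        cases h with | lam hb => ?_
        cases hb with | app h1 h2 => ?_
        have h2' : HasTy (vr n σ₀) σ₀ := hasTy_vr
        have : σ₀ = _ := hasTy_unique h2' h2
        subst this
        have heq : σ = _ := hasTy_unique hs h1
        subst heq
        exact HasTy.lam (HasTy.app h1 h2)
  | @ctx s t σ' C h hty ih =>
      intro σ
      constructor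
      · intro hs
        rcases fill_hasTy_exists C hs with ⟨υ, hsu⟩
        exact fill_hasTy_replace C hs hsu (ih.1 hsu)
      · intro hs
        rcases fill_hasTy_exists C hs with ⟨υ, htu⟩
        exact fill_hasTy_replace C hs htu (ih.2 htu)

theorem lamEq_hasTy {s t : Tm} (h : LamEq s t) {σ : Ty} (hs : HasTy s σ) : HasTy t σ :=
  (lamEq_hasTy_iff h).1 hs

theorem lamEq_appL {s s' t : Tm} {σ : Ty} (h : LamEq s s') (hty : HasTy (Tm.app s t) σ) :
    LamEq (.app s t) (.app s' t) :=
  LamEq.ctx (Ctx.appL Ctx.hole t) h hty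

theorem lamEq_appR {s t t' : Tm} {σ : Ty} (h : LamEq t t') (hty : HasTy (Tm.app s t) σ) :
    LamEq (.app s t) (.app s t') :=
  LamEq.ctx (Ctx.appR s Ctx.hole) h hty

theorem lamEq_app {s s' t t' : Tm} {σ : Ty} (h1 : LamEq s s') (h2 : LamEq t t')
    (hty : HasTy (Tm.app s t) σ) : LamEq (.app s t) (.app s' t') := by
  have c1 : LamEq (.app s t) (.app s' t) := lamEq_appL h1 hty
  exact LamEq.trans c1 (lamEq_appR h2 (lamEq_hasTy c1 hty))

theorem lamEq_lam {n : ℕ} {σ₀ : Ty} {s t : Tm} {σ : Ty} (h : LamEq s t)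
    (hty : HasTy (Tm.lam n σ₀ s) σ) : LamEq (.lam n σ₀ s) (.lam n σ₀ t) :=
  LamEq.ctx (Ctx.lam n σ₀ Ctx.hole) h hty

theorem substAux_id_lamEq {s : Tm} {σ : Ty} (hs : HasTy s σ) {ρ : ℕ × Ty → Tm}
    (hρ : ∀ p ∈ fv s, ρ p = vr p.1 p.2) : LamEq (substAux ρ s) s := by
  apply lamEq_of_db0 (σ := σ)
  · apply substAux_hasTy hs
    intro p hp
    rw [hρ p hp]; exact hasTy_vr
  · exact hs
  · exact db0_substAux_id hρ

theorem substAux_closed_lamEq {s : Tm} {σ : Ty} (hs : HasTy s σ) (hc : Closed s)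
    (ρ : ℕ × Ty → Tm) : LamEq (substAux ρ s) s := by
  apply substAux_id_lamEq hs
  intro p hp
  rw [Closed] at hc
  rw [hc] at hp
  exact absurd hp (Finset.notMem_empty p)

theorem db0_substAux_closed {s : Tm} (hc : Closed s) (ρ : ℕ × Ty → Tm) :
    db0 (substAux ρ s) = db0 s := by
  apply db0_substAux_id
  intro p hp
  rw [Closed] at hc; rw [hc] at hp
  exact absurd hp (Finset.notMem_empty p)

theorem lamEq_comp {s : Tm} {σ : Ty} (hs : HasTy s σ) {ρ θ : ℕ × Ty → Tm}
    (hρ : ∀ p ∈ fv s, HasTy (ρ p) p.2) (hθ : ∀ q, HasTy (θ q) q.2) :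
    LamEq (substAux θ (substAux ρ s)) (substAux (fun p => substAux θ (ρ p)) s) := by
  apply lamEq_of_db0 (σ := σ)
  · exact substAux_hasTy (substAux_hasTy hs hρ) (fun q _ => hθ q)
  · exact substAux_hasTy hs (fun p hp => substAux_hasTy (hρ p hp) (fun q _ => hθ q))
  · exact db0_comp s ρ θ

theorem substAux_pointwise_lamEq {s : Tm} {σ : Ty} (hs : HasTy s σ) {ρ ρ' : ℕ × Ty → Tm}
    (hρ : ∀ p ∈ fv s, HasTy (ρ p) p.2) (hρ' : ∀ p ∈ fv s, HasTy (ρ' p) p.2)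
    (h : ∀ p ∈ fv s, db0 (ρ p) = db0 (ρ' p)) :
    LamEq (substAux ρ s) (substAux ρ' s) := by
  apply lamEq_of_db0 (σ := σ)
  · exact substAux_hasTy hs hρ
  · exact substAux_hasTy hs hρ'
  · exact db0_subst_pointwise h

theorem lamEq_beta' {n : ℕ} {σ₀ : Ty} {b u : Tm} {τ : Ty}
    (hty : HasTy (Tm.app (.lam n σ₀ b) u) τ) :
    LamEq (.app (.lam n σ₀ b) u) (substAux (Function.update idSub (n, σ₀) u) b) :=
  LamEq.beta hty

end LamEqUtil
section DedUtil

theorem hasTy_bot : HasTy botTm .base := HasTy.name .bot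
theorem hasTy_top : HasTy topTm .base := hasTy_imp hasTy_bot hasTy_bot
theorem hasTy_neg {s} (h : HasTy s .base) : HasTy (negTm s) .base := hasTy_imp h hasTy_bot
theorem hasTy_neg_iff {s} : HasTy (negTm s) .base ↔ HasTy s .base := by
  rw [negTm, hasTy_imp_iff]; exact ⟨fun h => h.1, fun h => ⟨h, hasTy_bot⟩⟩
theorem hasTy_or {s t} (hs : HasTy s .base) (ht : HasTy t .base) : HasTy (orTm s t) .base :=
  hasTy_imp (hasTy_imp hs ht) ht
theorem hasTy_or_iff {s t} : HasTy (orTm s t) .base ↔ HasTy s .base ∧ HasTy t .base := by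
  rw [orTm, hasTy_imp_iff, hasTy_imp_iff]; tauto
theorem hasTy_and {s t} (hs : HasTy s .base) (ht : HasTy t .base) : HasTy (andTm s t) .base :=
  hasTy_neg (hasTy_or (hasTy_neg hs) (hasTy_neg ht))
theorem hasTy_and_iff {s t} : HasTy (andTm s t) .base ↔ HasTy s .base ∧ HasTy t .base := by
  rw [andTm, hasTy_neg_iff, hasTy_or_iff, hasTy_neg_iff, hasTy_neg_iff]
theorem hasTy_equiv {s t} (hs : HasTy s .base) (ht : HasTy t .base) :
    HasTy (equivTm s t) .base := hasTy_and (hasTy_imp hs ht) (hasTy_imp ht hs)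
theorem hasTy_equiv_iff {s t} : HasTy (equivTm s t) .base ↔ HasTy s .base ∧ HasTy t .base := by
  rw [equivTm, hasTy_and_iff, hasTy_imp_iff, hasTy_imp_iff]; tauto

theorem ded_hasTy {A : Finset Tm} {s : Tm} (h : Ded A s) :
    (∀ u ∈ A, HasTy u .base) ∧ HasTy s .base := by
  induction h with
  | triv hA hs =>
      refine ⟨?_, hs⟩
      intro u hu
      rcases Finset.mem_insert.1 hu with h | h
      · subst h; exact hs
      · exact hA u h
  | weak hs h ih =>
      refine ⟨?_, ih.2⟩
      intro u hu
      rcases Finset.mem_insert.1 hu with h' | h'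
      · subst h'; exact hs
      · exact ih.1 u h'
  | @ded A s t h ih =>
      exact ⟨fun u hu => ih.1 u (Finset.mem_insert_of_mem hu),
        hasTy_imp (ih.1 s (Finset.mem_insert_self s A)) ih.2⟩
  | mp h1 h2 ih1 ih2 => exact ⟨ih1.1, (hasTy_imp_iff.1 ih1.2).2⟩
  | dn h ih =>
      exact ⟨ih.1, (hasTy_imp_iff.1 (hasTy_imp_iff.1 ih.2).1).1⟩
  | lam h hl ht ih => exact ⟨ih.1, ht⟩
  | br C hC h1 h2 ht ih1 ih2 => exact ⟨ih2.1, ht⟩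

theorem dedTypedA {A : Finset Tm} {s : Tm} (h : Ded A s) : ∀ u ∈ A, HasTy u .base :=
  (ded_hasTy h).1
theorem dedTyped {A : Finset Tm} {s : Tm} (h : Ded A s) : HasTy s .base :=
  (ded_hasTy h).2

theorem dedHyp {A : Finset Tm} {s : Tm} (hA : ∀ u ∈ A, HasTy u .base) (hs : s ∈ A) :
    Ded A s := by
  rw [← Finset.insert_erase hs]
  exact Ded.triv (fun u hu => hA u (Finset.mem_of_mem_erase hu)) (hA s hs)

theorem dedWeakenUnion {A : Finset Tm} {t : Tm} (h : Ded A t) (E : Finset Tm)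
    (hE : ∀ u ∈ E, HasTy u .base) : Ded (A ∪ E) t := by
  induction E using Finset.induction_on with
  | empty => simpa using h
  | @insert a E ha ih =>
      rw [Finset.union_insert]
      exact Ded.weak (hE a (Finset.mem_insert_self a E))
        (ih (fun u hu => hE u (Finset.mem_insert_of_mem hu)))

theorem dedWeaken {A B : Finset Tm} {t : Tm} (h : Ded A t) (hAB : A ⊆ B)
    (hB : ∀ u ∈ B, HasTy u .base) : Ded B t := by
  have : A ∪ B = B := Finset.union_eq_right.2 hAB
  rw [← this]
  exact dedWeakenUnion h B hB

theorem dedWeak1 {A : Finset Tm} {s t : Tm} (h : Ded A t) (hs : HasTy s .base) :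
    Ded (insert s A) t := Ded.weak hs h

theorem dedCut {A : Finset Tm} {s t : Tm} (h1 : Ded A s) (h2 : Ded (insert s A) t) :
    Ded A t := Ded.mp (Ded.ded h2) h1

theorem dedEfq {A : Finset Tm} {t : Tm} (h : Ded A botTm) (ht : HasTy t .base) :
    Ded A t := by
  have h2 : Ded (insert (negTm t) A) botTm := Ded.weak (hasTy_neg ht) h
  exact Ded.dn (Ded.ded h2)

theorem dedDni {A : Finset Tm} {s : Tm} (h : Ded A s) : Ded A (negTm (negTm s)) := by
  apply Ded.ded
  exact Ded.mp (dedHyp (dedTypedA (Ded.weak (hasTy_neg (dedTyped h)) h))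
      (Finset.mem_insert_self _ _))
    (Ded.weak (hasTy_neg (dedTyped h)) h)

theorem dedCaseSplit {A : Finset Tm} {s t : Tm} (h1 : Ded (insert s A) t)
    (h2 : Ded (insert (negTm s) A) t) : Ded A t := by
  have hs : HasTy s .base := dedTypedA h1 s (Finset.mem_insert_self s A)
  have ht : HasTy t .base := dedTyped h1
  have d1 : Ded A (impTm s t) := Ded.ded h1
  have d2 : Ded A (impTm (negTm s) t) := Ded.ded h2
  have hA : ∀ u ∈ A, HasTy u .base := fun u hu => dedTypedA h1 u (Finset.mem_insert_of_mem hu)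
  have hA' : ∀ u ∈ insert (negTm t) A, HasTy u .base := by
    intro u hu
    rcases Finset.mem_insert.1 hu with h | h
    · subst h; exact hasTy_neg ht
    · exact hA u h
  have w1 : Ded (insert (negTm t) A) (impTm s t) := Ded.weak (hasTy_neg ht) d1
  have w2 : Ded (insert (negTm t) A) (impTm (negTm s) t) := Ded.weak (hasTy_neg ht) d2
  have hnt : Ded (insert (negTm t) A) (negTm t) := dedHyp hA' (Finset.mem_insert_self _ _)
  have ns : Ded (insert (negTm t) A) (negTm s) := by
    apply Ded.ded
    have hA'' : ∀ u ∈ insert s (insert (negTm t) A), HasTy u .base := by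
      intro u hu
      rcases Finset.mem_insert.1 hu with h | h
      · subst h; exact hs
      · exact hA' u h
    have tt : Ded (insert s (insert (negTm t) A)) t :=
      Ded.mp (Ded.weak hs w1) (dedHyp hA'' (Finset.mem_insert_self _ _))
    exact Ded.mp (Ded.weak hs hnt) tt
  have t' : Ded (insert (negTm t) A) t := Ded.mp w2 ns
  exact Ded.dn (Ded.ded (Ded.mp hnt t'))

theorem dedOrI1 {A : Finset Tm} {s t : Tm} (h : Ded A s) (ht : HasTy t .base) :
    Ded A (orTm s t) := by
  apply Ded.ded
  exact Ded.mp (dedHyp (dedTypedA (Ded.weak (hasTy_imp (dedTyped h) ht) h))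
    (Finset.mem_insert_self _ _)) (Ded.weak (hasTy_imp (dedTyped h) ht) h)

theorem dedOrI2 {A : Finset Tm} {s t : Tm} (h : Ded A t) (hs : HasTy s .base) :
    Ded A (orTm s t) :=
  Ded.ded (Ded.weak (hasTy_imp hs (dedTyped h)) h)

theorem dedOrE {A : Finset Tm} {s t u : Tm} (h : Ded A (orTm s t))
    (h1 : Ded (insert s A) u) (h2 : Ded (insert t A) u) : Ded A u := by
  have hst : HasTy s .base ∧ HasTy t .base := hasTy_or_iff.1 (dedTyped h)
  have hu : HasTy u .base := dedTyped h1
  apply dedCaseSplit h1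
  have hA' : ∀ v ∈ insert (negTm s) A, HasTy v .base := dedTypedA (Ded.weak (hasTy_neg hst.1) h)
  have st : Ded (insert (negTm s) A) (impTm s t) := by
    apply Ded.ded
    apply dedEfq _ hst.2
    have hA'' : ∀ v ∈ insert s (insert (negTm s) A), HasTy v .base :=
      dedTypedA (Ded.weak hst.1 (Ded.weak (hasTy_neg hst.1) h))
    exact Ded.mp (dedHyp hA'' (Finset.mem_insert_of_mem (Finset.mem_insert_self _ _)))
      (dedHyp hA'' (Finset.mem_insert_self _ _))
  have tt : Ded (insert (negTm s) A) t := Ded.mp (Ded.weak (hasTy_neg hst.1) h) st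
  exact Ded.mp (Ded.weak (hasTy_neg hst.1) (Ded.ded h2)) tt

theorem dedAndI {A : Finset Tm} {s t : Tm} (h1 : Ded A s) (h2 : Ded A t) :
    Ded A (andTm s t) := by
  have hs := dedTyped h1
  have ht := dedTyped h2
  apply Ded.ded
  have hor : HasTy (orTm (negTm s) (negTm t)) .base := hasTy_or (hasTy_neg hs) (hasTy_neg ht)
  have hA' := dedTypedA (Ded.weak hor h1)
  have ns : Ded (insert (orTm (negTm s) (negTm t)) A) (impTm (negTm s) (negTm t)) := by
    apply Ded.ded
    apply dedEfq _ (hasTy_neg ht)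
    have hA'' := dedTypedA (Ded.weak (hasTy_neg hs) (Ded.weak hor h1))
    exact Ded.mp (dedHyp hA'' (Finset.mem_insert_self _ _))
      (Ded.weak (hasTy_neg hs) (Ded.weak hor h1))
  have nt : Ded (insert (orTm (negTm s) (negTm t)) A) (negTm t) :=
    Ded.mp (dedHyp hA' (Finset.mem_insert_self _ _)) ns
  exact Ded.mp nt (Ded.weak hor h2)

theorem dedAndE1 {A : Finset Tm} {s t : Tm} (h : Ded A (andTm s t)) : Ded A s := by
  have hst := hasTy_and_iff.1 (dedTyped h)
  apply Ded.dn
  apply Ded.ded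
  have hA' := dedTypedA (Ded.weak (hasTy_neg hst.1) h)
  have or1 : Ded (insert (negTm s) A) (orTm (negTm s) (negTm t)) :=
    dedOrI1 (dedHyp hA' (Finset.mem_insert_self _ _)) (hasTy_neg hst.2)
  exact Ded.mp (Ded.weak (hasTy_neg hst.1) h) or1

theorem dedAndE2 {A : Finset Tm} {s t : Tm} (h : Ded A (andTm s t)) : Ded A t := by
  have hst := hasTy_and_iff.1 (dedTyped h)
  apply Ded.dn
  apply Ded.ded
  have hA' := dedTypedA (Ded.weak (hasTy_neg hst.2) h)
  have or2 : Ded (insert (negTm t) A) (orTm (negTm s) (negTm t)) :=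
    dedOrI2 (dedHyp hA' (Finset.mem_insert_self _ _)) (hasTy_neg hst.1)
  exact Ded.mp (Ded.weak (hasTy_neg hst.2) h) or2

theorem dedEquivI {A : Finset Tm} {s t : Tm} (h1 : Ded A (impTm s t))
    (h2 : Ded A (impTm t s)) : Ded A (equivTm s t) := dedAndI h1 h2
theorem dedEquivE1 {A : Finset Tm} {s t : Tm} (h : Ded A (equivTm s t)) :
    Ded A (impTm s t) := dedAndE1 h
theorem dedEquivE2 {A : Finset Tm} {s t : Tm} (h : Ded A (equivTm s t)) :
    Ded A (impTm t s) := dedAndE2 h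
theorem dedEquivMp {A : Finset Tm} {s t : Tm} (h : Ded A (equivTm s t)) (hs : Ded A s) :
    Ded A t := Ded.mp (dedEquivE1 h) hs
theorem dedEquivMpr {A : Finset Tm} {s t : Tm} (h : Ded A (equivTm s t)) (ht : Ded A t) :
    Ded A s := Ded.mp (dedEquivE2 h) ht

theorem dedEquivSame {A : Finset Tm} {s t : Tm} (h1 : Ded A s) (h2 : Ded A t) :
    Ded A (equivTm s t) :=
  dedEquivI (Ded.ded (Ded.weak (dedTyped h1) h2)) (Ded.ded (Ded.weak (dedTyped h2) h1))

theorem dedEquivSameNeg {A : Finset Tm} {s t : Tm} (h1 : Ded A (negTm s))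
    (h2 : Ded A (negTm t)) : Ded A (equivTm s t) := by
  have hs := hasTy_neg_iff.1 (dedTyped h1)
  have ht := hasTy_neg_iff.1 (dedTyped h2)
  apply dedEquivI
  · apply Ded.ded
    apply dedEfq _ ht
    have hA' := dedTypedA (Ded.weak hs h1)
    exact Ded.mp (Ded.weak hs h1) (dedHyp hA' (Finset.mem_insert_self _ _))
  · apply Ded.ded
    apply dedEfq _ hs
    have hA' := dedTypedA (Ded.weak ht h2)
    exact Ded.mp (Ded.weak ht h2) (dedHyp hA' (Finset.mem_insert_self _ _))

theorem dedTopI {A : Finset Tm} (hA : ∀ u ∈ A, HasTy u .base) : Ded A topTm :=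
  Ded.ded (Ded.triv hA hasTy_bot)

theorem dedNegI {A : Finset Tm} {s : Tm} (h : Ded (insert s A) botTm) : Ded A (negTm s) :=
  Ded.ded h

theorem dedLamEq {A : Finset Tm} {s t : Tm} (h : Ded A s) (hl : LamEq s t) : Ded A t :=
  Ded.lam h hl (lamEq_hasTy hl (dedTyped h))

theorem dedLamEqRev {A : Finset Tm} {s t : Tm} (h : Ded A t) (hl : LamEq s t)
    (hs : HasTy s .base) : Ded A s := Ded.lam h (LamEq.symm hl) hs

end DedUtil
section ListUtil

theorem andList_cons {s : Tm} {l : List Tm} (h : l ≠ []) :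
    andList (s :: l) = andTm s (andList l) := by
  cases l with
  | nil => exact absurd rfl h
  | cons a l' => rfl

theorem orList_cons {s : Tm} {l : List Tm} (h : l ≠ []) :
    orList (s :: l) = orTm s (orList l) := by
  cases l with
  | nil => exact absurd rfl h
  | cons a l' => rfl

theorem hasTy_andList : ∀ {l : List Tm}, (∀ u ∈ l, HasTy u .base) → HasTy (andList l) .base := by
  intro l
  induction l with
  | nil => intro _; exact hasTy_top
  | cons s l ih =>
      intro h
      cases l with
      | nil => exact h s (by simp)
      | cons a l' =>
          rw [andList_cons (by simp)]
          exact hasTy_and (h s (by simp)) (ih (fun u hu => h u (by simp [hu])))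

theorem hasTy_orList : ∀ {l : List Tm}, (∀ u ∈ l, HasTy u .base) → HasTy (orList l) .base := by
  intro l
  induction l with
  | nil => intro _; exact hasTy_bot
  | cons s l ih =>
      intro h
      cases l with
      | nil => exact h s (by simp)
      | cons a l' =>
          rw [orList_cons (by simp)]
          exact hasTy_or (h s (by simp)) (ih (fun u hu => h u (by simp [hu])))

theorem dedAndListI : ∀ {l : List Tm} {A : Finset Tm}, (∀ u ∈ A, HasTy u .base) →
    (∀ u ∈ l, Ded A u) → (∀ u ∈ l, HasTy u .base) → Ded A (andList l) := by
  intro l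
  induction l with
  | nil => intro A hA _ _; exact dedTopI hA
  | cons s l ih =>
      intro A hA h hl
      cases l with
      | nil => exact h s (by simp)
      | cons a l' =>
          rw [andList_cons (by simp)]
          exact dedAndI (h s (by simp))
            (ih hA (fun u hu => h u (by simp [hu])) (fun u hu => hl u (by simp [hu])))

theorem dedAndListE : ∀ {l : List Tm} {A : Finset Tm} {u : Tm}, Ded A (andList l) →
    u ∈ l → Ded A u := by
  intro l
  induction l with
  | nil => intro A u _ hu; exact absurd hu (by simp)
  | cons s l ih =>
      intro A u h hu
      cases l with
      | nil =>
          rcases List.mem_singleton.1 hu with h'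
          subst h'; exact h
      | cons a l' =>
          rw [andList_cons (by simp)] at h
          rcases List.mem_cons.1 hu with h' | h'
          · subst h'; exact dedAndE1 h
          · exact ih (dedAndE2 h) h'

theorem dedOrListI : ∀ {l : List Tm} {A : Finset Tm} {u : Tm}, Ded A u →
    u ∈ l → (∀ v ∈ l, HasTy v .base) → Ded A (orList l) := by
  intro l
  induction l with
  | nil => intro A u _ hu; exact absurd hu (by simp)
  | cons s l ih =>
      intro A u h hu hl
      cases l with
      | nil =>
          rcases List.mem_singleton.1 hu with h'
          subst h'; exact h
      | cons a l' =>
          rw [orList_cons (by simp)]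
          rcases List.mem_cons.1 hu with h' | h'
          · subst h'
            exact dedOrI1 h (hasTy_orList (fun v hv => hl v (by simp [hv])))
          · exact dedOrI2 (ih h h' (fun v hv => hl v (by simp [hv]))) (hl s (by simp))

theorem dedOrListE : ∀ {l : List Tm} {A : Finset Tm} {t : Tm}, Ded A (orList l) →
    (∀ u ∈ l, Ded (insert u A) t) → HasTy t .base → Ded A t := by
  intro l
  induction l with
  | nil => intro A t h _ ht; exact dedEfq h ht
  | cons s l ih =>
      intro A t h hb ht
      cases l with
      | nil => exact dedCut h (hb s (by simp))
      | cons a l' =>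
          rw [orList_cons (by simp)] at h
          have hA := dedTypedA h
          have hst := hasTy_or_iff.1 (dedTyped h)
          have horl : HasTy (orList (a :: l')) .base := hst.2
          have hA2 : ∀ v ∈ insert (orList (a :: l')) A, HasTy v .base := by
            intro v hv
            rcases Finset.mem_insert.1 hv with h' | h'
            · subst h'; exact horl
            · exact hA v h'
          apply dedOrE h (hb s (by simp))
          apply ih (dedHyp hA2 (Finset.mem_insert_self _ _)) _ ht
          intro u hu
          apply dedWeaken (hb u (List.mem_cons_of_mem s hu))
          · intro v hv
            rcases Finset.mem_insert.1 hv with h' | h'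
            · subst h'; exact Finset.mem_insert_self _ _
            · exact Finset.mem_insert_of_mem (Finset.mem_insert_of_mem h')
          · intro v hv
            rcases Finset.mem_insert.1 hv with h' | h'
            · subst h'
              exact dedTypedA (hb _ (List.mem_cons_of_mem s hu)) _ (Finset.mem_insert_self _ _)
            · exact hA2 v h'

theorem dedOrListRefute {l : List Tm} {A : Finset Tm} (hA : ∀ u ∈ A, HasTy u .base)
    (hl : ∀ u ∈ l, HasTy u .base)
    (h : ∀ u ∈ l, Ded (insert u A) botTm) : Ded A (negTm (orList l)) := by
  apply dedNegI
  have horl : HasTy (orList l) .base := hasTy_orList hl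
  have hA' : ∀ u ∈ insert (orList l) A, HasTy u .base := by
    intro u hu
    rcases Finset.mem_insert.1 hu with h' | h'
    · subst h'; exact horl
    · exact hA u h'
  apply dedOrListE (dedHyp hA' (Finset.mem_insert_self _ _))
  · intro u hu
    apply dedWeaken (h u hu)
    · intro v hv
      rcases Finset.mem_insert.1 hv with h' | h'
      · subst h'; exact Finset.mem_insert_self _ _
      · exact Finset.mem_insert_of_mem (Finset.mem_insert_of_mem h')
    · intro v hv
      rcases Finset.mem_insert.1 hv with h' | h'
      · subst h'; exact hl _ hu
      · exact hA' v h'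
  · exact hasTy_bot

theorem lamEq_impC {s s' t t' : Tm} (h1 : LamEq s s') (h2 : LamEq t t')
    (hs : HasTy s .base) (ht : HasTy t .base) : LamEq (impTm s t) (impTm s' t') := by
  apply lamEq_app (σ := .base)
  · exact lamEq_app (σ := .arrow .base .base) (LamEq.refl (HasTy.name .imp)) h1
      (HasTy.app (HasTy.name .imp) hs)
  · exact h2
  · exact hasTy_imp hs ht

theorem lamEq_negC {s s' : Tm} (h : LamEq s s') (hs : HasTy s .base) :
    LamEq (negTm s) (negTm s') :=
  lamEq_impC h (LamEq.refl hasTy_bot) hs hasTy_bot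

theorem lamEq_orC {s s' t t' : Tm} (h1 : LamEq s s') (h2 : LamEq t t')
    (hs : HasTy s .base) (ht : HasTy t .base) : LamEq (orTm s t) (orTm s' t') :=
  lamEq_impC (lamEq_impC h1 h2 hs ht) h2 (hasTy_imp hs ht) ht

theorem lamEq_andC {s s' t t' : Tm} (h1 : LamEq s s') (h2 : LamEq t t')
    (hs : HasTy s .base) (ht : HasTy t .base) : LamEq (andTm s t) (andTm s' t') :=
  lamEq_negC (lamEq_orC (lamEq_negC h1 hs) (lamEq_negC h2 ht) (hasTy_neg hs) (hasTy_neg ht))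
    (hasTy_or (hasTy_neg hs) (hasTy_neg ht))

theorem lamEq_equivC {s s' t t' : Tm} (h1 : LamEq s s') (h2 : LamEq t t')
    (hs : HasTy s .base) (ht : HasTy t .base) : LamEq (equivTm s t) (equivTm s' t') :=
  lamEq_andC (lamEq_impC h1 h2 hs ht) (lamEq_impC h2 h1 ht hs)
    (hasTy_imp hs ht) (hasTy_imp ht hs)

theorem lamEq_andList : ∀ {l l' : List Tm}, List.Forall₂ LamEq l l' →
    (∀ u ∈ l, HasTy u .base) → LamEq (andList l) (andList l') := by
  intro l l' h
  induction h with
  | nil => intro _; exact LamEq.refl hasTy_top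
  | @cons s s' l l' h1 h2 ih =>
      intro hl
      cases h2 with
      | nil => exact h1
      | @cons a a' l2 l2' ha hl2 =>
          rw [andList_cons (s := s) (by simp), andList_cons (s := s') (by simp)]
          refine lamEq_andC h1 (ih ?_) (hl s (by simp)) ?_
          · intro u hu; exact hl u (by simp [hu])
          · apply hasTy_andList
            intro u hu; exact hl u (by simp [hu])

theorem lamEq_orList : ∀ {l l' : List Tm}, List.Forall₂ LamEq l l' →
    (∀ u ∈ l, HasTy u .base) → LamEq (orList l) (orList l') := by
  intro l l' h
  induction h with
  | nil => intro _; exact LamEq.refl hasTy_bot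
  | @cons s s' l l' h1 h2 ih =>
      intro hl
      cases h2 with
      | nil => exact h1
      | @cons a a' l2 l2' ha hl2 =>
          rw [orList_cons (s := s) (by simp), orList_cons (s := s') (by simp)]
          refine lamEq_orC h1 (ih ?_) (hl s (by simp)) ?_
          · intro u hu; exact hl u (by simp [hu])
          · apply hasTy_orList
            intro u hu; exact hl u (by simp [hu])

theorem substAux_andList : ∀ (l : List Tm) (ρ : ℕ × Ty → Tm),
    substAux ρ (andList l) = andList (l.map (substAux ρ)) := by
  intro l
  induction l with
  | nil => intro ρ; rfl
  | cons s l ih =>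
      intro ρ
      cases l with
      | nil => rfl
      | cons a l' =>
          rw [List.map_cons, andList_cons (s := s) (by simp),
            andList_cons (s := substAux ρ s) (by simp), substAux_and, ih]

theorem substAux_orList : ∀ (l : List Tm) (ρ : ℕ × Ty → Tm),
    substAux ρ (orList l) = orList (l.map (substAux ρ)) := by
  intro l
  induction l with
  | nil => intro ρ; rfl
  | cons s l ih =>
      intro ρ
      cases l with
      | nil => rfl
      | cons a l' =>
          rw [List.map_cons, orList_cons (s := s) (by simp),
            orList_cons (s := substAux ρ s) (by simp), substAux_or, ih]

end ListUtil
section QuoteTy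

def tySize : Ty → ℕ
  | .base => 1
  | .arrow σ τ => tySize σ + tySize τ + 1

theorem args_size : ∀ (σ : Ty) (υ : Ty), υ ∈ σ.args → tySize υ < tySize σ := by
  intro σ
  induction σ with
  | base => intro υ h; exact absurd h (by simp [Ty.args])
  | arrow σ τ ihσ ihτ =>
      intro υ h
      rcases List.mem_cons.1 h with h | h
      · subst h; simp [tySize]
      · have := ihτ υ h; simp [tySize]; omega

def mkArrow (l : List Ty) : Ty := l.foldr .arrow .base

theorem mkArrow_args : ∀ (σ : Ty), mkArrow σ.args = σ := by
  intro σ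
  induction σ with
  | base => rfl
  | arrow σ τ ihσ ihτ => simp [mkArrow, Ty.args] at ihτ ⊢; exact ihτ

theorem hasTy_mkLams : ∀ (l : List Ty) (k : ℕ) {body : Tm}, HasTy body .base →
    HasTy (mkLams l k body) (mkArrow l) := by
  intro l
  induction l with
  | nil => intro k body h; exact h
  | cons σ l ih => intro k body h; exact HasTy.lam (ih (k + 1) h)

def bnd : List Ty → ℕ → Finset (ℕ × Ty)
  | [], _ => ∅
  | σ :: l, k => insert (k, σ) (bnd l (k + 1))

theorem fv_mkLams : ∀ (l : List Ty) (k : ℕ) (body : Tm),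
    fv (mkLams l k body) ⊆ fv body \ bnd l k := by
  intro l
  induction l with
  | nil => intro k body; simp [mkLams, bnd]
  | cons σ l ih =>
      intro k body q hq
      simp only [mkLams, fv_lam, Finset.mem_erase] at hq
      rcases hq with ⟨hq1, hq2⟩
      have := ih (k + 1) body hq2
      simp only [Finset.mem_sdiff] at this ⊢
      refine ⟨this.1, ?_⟩
      simp only [bnd, Finset.mem_insert, not_or]
      exact ⟨hq1, this.2⟩

theorem fv_andList : ∀ {l : List Tm} {S : Finset (ℕ × Ty)},
    (∀ u ∈ l, fv u ⊆ S) → fv (andList l) ⊆ S := by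
  intro l
  induction l with
  | nil => intro S _; simp [andList, topTm]
  | cons s l ih =>
      intro S h
      cases l with
      | nil => exact h s (by simp)
      | cons a l' =>
          rw [andList_cons (by simp)]
          rw [fv_and]
          exact Finset.union_subset (h s (by simp)) (ih (fun u hu => h u (by simp [hu])))

theorem fv_orList : ∀ {l : List Tm} {S : Finset (ℕ × Ty)},
    (∀ u ∈ l, fv u ⊆ S) → fv (orList l) ⊆ S := by
  intro l
  induction l with
  | nil => intro S _ q hq; exact absurd hq (Finset.notMem_empty q)
  | cons s l ih =>
      intro S h
      cases l with
      | nil => exact h s (by simp)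
      | cons a l' =>
          rw [orList_cons (by simp)]
          rw [fv_or]
          exact Finset.union_subset (h s (by simp)) (ih (fun u hu => h u (by simp [hu])))

def ADOk : ∀ (l : List Ty), ArgData l → Prop
  | [], _ => True
  | σ :: l, (d, ds) => d = quoteEq σ ∧ ADOk l ds

theorem argData_ok : ∀ (σ : Ty), ADOk σ.args (argData σ)
  | .base => trivial
  | .arrow σ τ => ⟨rfl, argData_ok τ⟩

noncomputable def eqConjQ : ∀ (l : List Ty), ℕ → Tup l → List Tm
  | [], _, _ => []
  | σ :: l, k, b => (.app (.app (eqTm σ) (vr k σ)) (quote σ b.1)) :: eqConjQ l (k + 1) b.2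

theorem eqConj_eq : ∀ (l : List Ty) (ad : ArgData l), ADOk l ad → ∀ (k : ℕ) (b : Tup l),
    eqConj l ad k b = eqConjQ l k b := by
  intro l
  induction l with
  | nil => intro ad _ k b; rfl
  | cons σ l ih =>
      rintro ⟨d, ds⟩ ⟨h1, h2⟩ k ⟨b, bs⟩
      subst h1
      simp only [eqConj, eqConjQ]
      rw [ih ds h2]
      rfl

theorem quote_def : ∀ (σ : Ty) (a : σ.sem), quote σ a = quoteBodyAux σ (argData σ) a := by
  intro σ a; cases σ <;> rfl

theorem eqTm_base : eqTm .base =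
    .lam 0 .base (.lam 1 .base (equivTm (vr 0 .base) (vr 1 .base))) := rfl

theorem eqTm_arrow (σ τ : Ty) : eqTm (.arrow σ τ) =
    .lam 0 (.arrow σ τ) (.lam 1 (.arrow σ τ)
      (.app (allTmAux σ (quoteEq σ).1)
        (.lam 2 σ
          (.app (.app (eqTm τ) (.app (vr 0 (.arrow σ τ)) (vr 2 σ)))
            (.app (vr 1 (.arrow σ τ)) (vr 2 σ)))))) := rfl

theorem quoteEq_fst (σ : Ty) (a : σ.sem) : (quoteEq σ).1 a = quote σ a := rfl

/-- Facts bundle for one type. -/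
def QFacts (σ : Ty) : Prop :=
  (∀ a, HasTy (quote σ a) σ ∧ fv (quote σ a) = ∅) ∧
    HasTy (eqTm σ) (.arrow σ (.arrow σ .base)) ∧ fv (eqTm σ) = ∅

theorem eqConjQ_facts : ∀ (l : List Ty) (k : ℕ) (b : Tup l), (∀ υ ∈ l, QFacts υ) →
    ∀ u ∈ eqConjQ l k b, HasTy u .base ∧ fv u ⊆ bnd l k := by
  intro l
  induction l with
  | nil => intro k b _ u hu; exact absurd hu (by simp [eqConjQ])
  | cons σ l ih =>
      intro k b h u hu
      rcases List.mem_cons.1 hu with h' | h'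
      · subst h'
        rcases h σ (by simp) with ⟨hq, he, hfe⟩
        constructor
        · exact HasTy.app (HasTy.app he hasTy_vr) (hq b.1).1
        · intro q hq'
          simp only [fv_app, Finset.mem_union, hfe, (hq b.1).2, fv_vr] at hq'
          simp only [bnd, Finset.mem_insert]
          rcases hq' with (hq' | hq') | hq'
          · exact absurd hq' (Finset.notMem_empty q)
          · left; exact Finset.mem_singleton.1 hq'
          · exact absurd hq' (Finset.notMem_empty q)
      · rcases ih (k + 1) b.2 (fun υ hυ => h υ (by simp [hυ])) u h' with ⟨h1, h2⟩
        refine ⟨h1, subset_trans h2 ?_⟩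
        simp [bnd, Finset.subset_insert]

theorem quote_facts_of_args {σ : Ty} (h : ∀ υ ∈ σ.args, QFacts υ) :
    ∀ a, HasTy (quote σ a) σ ∧ fv (quote σ a) = ∅ := by
  intro a
  rw [quote_def]
  unfold quoteBodyAux
  have hconj : ∀ b : Tup σ.args, ∀ u ∈ eqConjQ σ.args 0 b, HasTy u .base ∧ fv u ⊆ bnd σ.args 0 :=
    fun b => eqConjQ_facts σ.args 0 b h
  have hbodyTy : ∀ u ∈ (((Finset.univ : Finset (Tup σ.args)).toList.filter
        (fun b => σ.applyTup a b))).map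
      (fun b => andList (eqConj σ.args (argData σ) 0 b)), HasTy u .base := by
    intro u hu
    rcases List.mem_map.1 hu with ⟨b, hb, hbu⟩
    subst hbu
    rw [eqConj_eq _ _ (argData_ok σ)]
    exact hasTy_andList (fun v hv => (hconj b v hv).1)
  have hbodyFv : fv (orList ((((Finset.univ : Finset (Tup σ.args)).toList.filter
        (fun b => σ.applyTup a b))).map
      (fun b => andList (eqConj σ.args (argData σ) 0 b)))) ⊆ bnd σ.args 0 := by
    apply fv_orList
    intro u hu
    rcases List.mem_map.1 hu with ⟨b, hb, hbu⟩
    subst hbu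
    rw [eqConj_eq _ _ (argData_ok σ)]
    exact fv_andList (fun v hv => (hconj b v hv).2)
  constructor
  · have := hasTy_mkLams σ.args 0 (hasTy_orList hbodyTy)
    rwa [mkArrow_args] at this
  · apply Finset.eq_empty_of_forall_notMem
    intro q hq
    have h1 := fv_mkLams σ.args 0 _ hq
    rw [Finset.mem_sdiff] at h1
    exact h1.2 (hbodyFv h1.1)

theorem allTmAux_facts {σ : Ty} (hq : ∀ a, HasTy (quote σ a) σ ∧ fv (quote σ a) = ∅) :
    HasTy (allTmAux σ (quoteEq σ).1) (.arrow (.arrow σ .base) .base) ∧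
      fv (allTmAux σ (quoteEq σ).1) = ∅ := by
  unfold allTmAux
  constructor
  · apply HasTy.lam
    apply hasTy_andList
    intro u hu
    rcases List.mem_map.1 hu with ⟨b, hb, hbu⟩
    subst hbu
    exact HasTy.app hasTy_vr (by rw [quoteEq_fst]; exact (hq b).1)
  · apply Finset.eq_empty_of_forall_notMem
    intro p hp
    simp only [fv_lam, Finset.mem_erase] at hp
    rcases hp with ⟨hp1, hp2⟩
    have : fv (andList (((Finset.univ : Finset σ.sem).toList).map
        (fun a => Tm.app (vr 0 (.arrow σ .base)) ((quoteEq σ).1 a)))) ⊆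
        {((0 : ℕ), Ty.arrow σ .base)} := by
      apply fv_andList
      intro u hu
      rcases List.mem_map.1 hu with ⟨b, hb, hbu⟩
      subst hbu
      rw [fv_app, fv_vr, quoteEq_fst, (hq b).2]
      simp
    have := this hp2
    rw [Finset.mem_singleton] at this
    exact hp1 this

theorem qFacts : ∀ (σ : Ty), QFacts σ := by
  have main : ∀ (N : ℕ) (σ : Ty), tySize σ ≤ N → QFacts σ := by
    intro N
    induction N with
    | zero => intro σ h; exact absurd h (by cases σ <;> simp [tySize])
    | succ N IH =>
        intro σ hN
        have hargs : ∀ υ ∈ σ.args, QFacts υ :=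
          fun υ hυ => IH υ (by have := args_size σ υ hυ; omega)
        have hquote := quote_facts_of_args hargs
        refine ⟨hquote, ?_⟩
        cases σ with
        | base =>
            constructor
            · rw [eqTm_base]
              exact HasTy.lam (HasTy.lam (hasTy_equiv hasTy_vr hasTy_vr))
            · rw [eqTm_base]
              apply Finset.eq_empty_of_forall_notMem
              intro q hq
              simp only [fv_lam, fv_equiv, fv_vr, Finset.mem_erase, Finset.mem_union,
                Finset.mem_singleton] at hq
              tauto
        | arrow σ₁ τ =>
            have hσ₁ : QFacts σ₁ := IH σ₁ (by simp [tySize] at hN; omega)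
            have hτ : QFacts τ := IH τ (by simp [tySize] at hN; omega)
            have hall := allTmAux_facts hσ₁.1
            constructor
            · rw [eqTm_arrow]
              apply HasTy.lam
              apply HasTy.lam
              apply HasTy.app hall.1
              apply HasTy.lam
              exact HasTy.app (HasTy.app hτ.2.1 (HasTy.app hasTy_vr hasTy_vr))
                (HasTy.app hasTy_vr hasTy_vr)
            · rw [eqTm_arrow]
              apply Finset.eq_empty_of_forall_notMem
              intro q hq
              simp only [fv_lam, fv_app, hall.2, hτ.2.2, fv_vr, Finset.mem_erase,
                Finset.mem_union, Finset.mem_singleton, Finset.notMem_empty,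
                false_or, or_false] at hq
              tauto
  intro σ
  exact main (tySize σ) σ le_rfl

theorem hasTy_quote {σ : Ty} (a : σ.sem) : HasTy (quote σ a) σ := ((qFacts σ).1 a).1
theorem fv_quote {σ : Ty} (a : σ.sem) : fv (quote σ a) = ∅ := ((qFacts σ).1 a).2
theorem hasTy_eqTm (σ : Ty) : HasTy (eqTm σ) (.arrow σ (.arrow σ .base)) := (qFacts σ).2.1
theorem fv_eqTm (σ : Ty) : fv (eqTm σ) = ∅ := (qFacts σ).2.2

theorem mem_univList {σ : Ty} (a : σ.sem) : a ∈ (Finset.univ : Finset σ.sem).toList :=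
  Finset.mem_toList.2 (Finset.mem_univ a)

theorem univList_ne_nil (σ : Ty) : (Finset.univ : Finset σ.sem).toList ≠ [] := by
  intro h
  have := mem_univList (σ := σ) default
  rw [h] at this
  exact absurd this List.not_mem_nil

end QuoteTy
section Beta

theorem forall₂_map_same {α : Type _} {l : List α} {f g : α → Tm} {r : Tm → Tm → Prop}
    (h : ∀ a ∈ l, r (f a) (g a)) : List.Forall₂ r (l.map f) (l.map g) := by
  induction l with
  | nil => simp
  | cons a l ih =>
      simp only [List.map_cons]
      exact List.Forall₂.cons (h a (by simp)) (ih (fun b hb => h b (by simp [hb])))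

theorem idSub_hasTy : ∀ p : ℕ × Ty, HasTy (idSub p) p.2 := fun _ => hasTy_vr

theorem update_hasTy {ρ : ℕ × Ty → Tm} (hρ : ∀ p, HasTy (ρ p) p.2) {n : ℕ} {σ : Ty}
    {u : Tm} (hu : HasTy u σ) : ∀ p, HasTy (Function.update ρ (n, σ) u p) p.2 := by
  intro p
  by_cases hp : p = (n, σ)
  · subst hp; rw [Function.update_self]; exact hu
  · rw [Function.update_of_ne hp]; exact hρ p

theorem lamEq_app2 {n₁ n₂ : ℕ} {σ₁ σ₂ τb : Ty} {body u v : Tm}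
    (hne : ((n₁ : ℕ), σ₁) ≠ ((n₂ : ℕ), σ₂))
    (hbody : HasTy body τb) (hu : HasTy u σ₁) (hv : HasTy v σ₂) :
    LamEq (.app (.app (.lam n₁ σ₁ (.lam n₂ σ₂ body)) u) v)
      (substAux (Function.update (Function.update idSub (n₁, σ₁) u) (n₂, σ₂) v) body) := by
  have hθ₁ty : ∀ p, HasTy (Function.update idSub (n₁, σ₁) u p) p.2 :=
    update_hasTy idSub_hasTy hu
  have hθ₁'ty : ∀ p, HasTy (Function.update (Function.update idSub (n₁, σ₁) u) (n₂, σ₂)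
      (vr (freshIdx (Function.update idSub (n₁, σ₁) u) n₂ σ₂ body) σ₂) p) p.2 :=
    update_hasTy hθ₁ty hasTy_vr
  have hρty : ∀ p, HasTy (Function.update (Function.update idSub (n₁, σ₁) u) (n₂, σ₂) v p) p.2 :=
    update_hasTy hθ₁ty hv
  have hθ₂ty : ∀ p, HasTy (Function.update idSub
      (freshIdx (Function.update idSub (n₁, σ₁) u) n₂ σ₂ body, σ₂) v p) p.2 :=
    update_hasTy idSub_hasTy hv
  have hRty : HasTy (Tm.app (.lam n₁ σ₁ (.lam n₂ σ₂ body)) u) (.arrow σ₂ τb) :=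
    HasTy.app (HasTy.lam (HasTy.lam hbody)) hu
  have s1 : LamEq (Tm.app (.lam n₁ σ₁ (.lam n₂ σ₂ body)) u)
      (substAux (Function.update idSub (n₁, σ₁) u) (.lam n₂ σ₂ body)) :=
    LamEq.beta hRty
  have hWty : HasTy (substAux (Function.update (Function.update idSub (n₁, σ₁) u) (n₂, σ₂)
      (vr (freshIdx (Function.update idSub (n₁, σ₁) u) n₂ σ₂ body) σ₂)) body) τb :=
    substAux_hasTy hbody (fun p _ => hθ₁'ty p)
  have s2 : LamEq (Tm.app (.app (.lam n₁ σ₁ (.lam n₂ σ₂ body)) u) v)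
      (.app (.lam (freshIdx (Function.update idSub (n₁, σ₁) u) n₂ σ₂ body) σ₂
        (substAux (Function.update (Function.update idSub (n₁, σ₁) u) (n₂, σ₂)
          (vr (freshIdx (Function.update idSub (n₁, σ₁) u) n₂ σ₂ body) σ₂)) body)) v) := by
    have h := lamEq_appL (t := v) s1 (HasTy.app hRty hv)
    rwa [substAux_lam] at h
  have s3 : LamEq (Tm.app (.lam (freshIdx (Function.update idSub (n₁, σ₁) u) n₂ σ₂ body) σ₂
      (substAux (Function.update (Function.update idSub (n₁, σ₁) u) (n₂, σ₂)
        (vr (freshIdx (Function.update idSub (n₁, σ₁) u) n₂ σ₂ body) σ₂)) body)) v)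
      (substAux (Function.update idSub
        (freshIdx (Function.update idSub (n₁, σ₁) u) n₂ σ₂ body, σ₂) v)
        (substAux (Function.update (Function.update idSub (n₁, σ₁) u) (n₂, σ₂)
          (vr (freshIdx (Function.update idSub (n₁, σ₁) u) n₂ σ₂ body) σ₂)) body)) :=
    LamEq.beta (HasTy.app (HasTy.lam hWty) hv)
  have s4 : LamEq (substAux (Function.update idSub
        (freshIdx (Function.update idSub (n₁, σ₁) u) n₂ σ₂ body, σ₂) v)
        (substAux (Function.update (Function.update idSub (n₁, σ₁) u) (n₂, σ₂)
          (vr (freshIdx (Function.update idSub (n₁, σ₁) u) n₂ σ₂ body) σ₂)) body))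
      (substAux (Function.update (Function.update idSub (n₁, σ₁) u) (n₂, σ₂) v) body) := by
    refine LamEq.trans (lamEq_comp hbody (fun p _ => hθ₁'ty p) hθ₂ty) ?_
    apply substAux_pointwise_lamEq hbody
    · intro p _
      exact substAux_hasTy (hθ₁'ty p) (fun q _ => hθ₂ty q)
    · intro p _; exact hρty p
    · intro p hp
      by_cases hpn : p = (n₂, σ₂)
      · subst hpn
        rw [Function.update_self, Function.update_self, substAux_vr, Function.update_self]
      · rw [Function.update_of_ne hpn, Function.update_of_ne hpn]
        have hfr : ∀ q ∈ fv (Function.update idSub (n₁, σ₁) u p), q.1 ≠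
            freshIdx (Function.update idSub (n₁, σ₁) u) n₂ σ₂ body :=
          freshIdx_spec p (Finset.mem_erase.2 ⟨hpn, hp⟩)
        apply db0_substAux_id
        intro q hq
        have : q ≠ (freshIdx (Function.update idSub (n₁, σ₁) u) n₂ σ₂ body, σ₂) := by
          intro hc
          exact hfr q hq (congrArg Prod.fst hc)
        rw [Function.update_of_ne this]
        rfl
  exact s2.trans (s3.trans s4)

theorem eqBase_applied {u v : Tm} (hu : HasTy u .base) (hv : HasTy v .base) :
    LamEq (Tm.app (.app (eqTm .base) u) v) (equivTm u v) := by
  have h := lamEq_app2 (n₁ := 0) (n₂ := 1) (σ₁ := .base) (σ₂ := .base)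
    (body := equivTm (vr 0 .base) (vr 1 .base)) (by simp)
    (hasTy_equiv hasTy_vr hasTy_vr) hu hv
  have e : substAux (Function.update (Function.update idSub (0, Ty.base) u) (1, Ty.base) v)
      (equivTm (vr 0 .base) (vr 1 .base)) = equivTm u v := by
    rw [substAux_equiv, substAux_vr, substAux_vr,
      Function.update_of_ne (show ((0 : ℕ), Ty.base) ≠ ((1 : ℕ), Ty.base) by simp),
      Function.update_self, Function.update_self]
  rw [e] at h
  rw [eqTm_base]
  exact h

theorem quote_base_false : quote .base false = botTm := by
  refine (quote_def .base _).trans ?_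
  unfold quoteBodyAux
  have : ((Finset.univ : Finset (Tup (Ty.base).args)).toList.filter
      (fun b => Ty.applyTup .base false b)) = [] := by
    simp [Ty.applyTup]
  rw [this]
  rfl

theorem tupNil_univ : (Finset.univ : Finset (Tup [])).toList = [PUnit.unit] := by
  have h1 : (Finset.univ : Finset (Tup [])) = {PUnit.unit} := by
    apply Finset.eq_singleton_iff_unique_mem.2
    refine ⟨Finset.mem_univ _, fun x _ => ?_⟩
    exact Subsingleton.elim (α := PUnit) x _
  rw [h1]
  exact Finset.toList_singleton _

theorem quote_base_true : quote .base true = topTm := by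
  refine (quote_def .base _).trans ?_
  unfold quoteBodyAux
  have h2 : ((Finset.univ : Finset (Tup (Ty.base).args)).toList.filter
      (fun b => Ty.applyTup .base true b)) = [PUnit.unit] := by
    have : ((Finset.univ : Finset (Tup (Ty.base).args)).toList.filter
        (fun b => Ty.applyTup .base true b)) = (Finset.univ : Finset (Tup [])).toList := by
      simp [Ty.applyTup]
      rfl
    rw [this, tupNil_univ]
  rw [h2]
  rfl

end Beta
section EqArrow

theorem eqArrow_applied {σ τ : Ty} {u v : Tm} (hu : HasTy u (.arrow σ τ))
    (hv : HasTy v (.arrow σ τ)) :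
    LamEq (Tm.app (.app (eqTm (.arrow σ τ)) u) v)
      (andList (((Finset.univ : Finset σ.sem).toList).map
        (fun a => Tm.app (.app (eqTm τ) (.app u (quote σ a))) (.app v (quote σ a))))) := by
  set A := Ty.arrow σ τ with hA
  set ALL := allTmAux σ (quoteEq σ).1 with hALLdef
  set KB := Tm.app (.app (eqTm τ) (.app (vr 0 A) (vr 2 σ))) (.app (vr 1 A) (vr 2 σ)) with hKBdef
  set K := Tm.lam 2 σ KB with hKdef
  have hALLf := allTmAux_facts (σ := σ) (fun a => (qFacts σ).1 a)
  have hALLty : HasTy ALL (.arrow (.arrow σ .base) .base) := hALLf.1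
  have hKBty : HasTy KB .base := by
    rw [hKBdef]
    exact HasTy.app (HasTy.app (hasTy_eqTm τ) (HasTy.app hasTy_vr hasTy_vr))
      (HasTy.app hasTy_vr hasTy_vr)
  have hKty : HasTy K (.arrow σ .base) := HasTy.lam hKBty
  have hbody : HasTy (Tm.app ALL K) .base := HasTy.app hALLty hKty
  set ρ := Function.update (Function.update idSub (0, A) u) (1, A) v with hρdef
  have hρty : ∀ p, HasTy (ρ p) p.2 := by
    rw [hρdef]; exact update_hasTy (update_hasTy idSub_hasTy hu) hv
  have h1 : LamEq (Tm.app (.app (eqTm A) u) v) (substAux ρ (Tm.app ALL K)) := by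
    rw [show eqTm A = Tm.lam 0 A (.lam 1 A (.app ALL K)) from rfl]
    exact lamEq_app2 (by simp) hbody hu hv
  have s2 : LamEq (substAux ρ (Tm.app ALL K)) (Tm.app ALL (substAux ρ K)) := by
    rw [substAux_app]
    exact lamEq_appL (substAux_closed_lamEq hALLty hALLf.2 ρ)
      (HasTy.app (substAux_hasTy hALLty (fun p _ => hρty p))
        (substAux_hasTy hKty (fun p _ => hρty p)))
  set F := substAux ρ K with hFdef0
  have hFty : HasTy F (.arrow σ .base) := substAux_hasTy hKty (fun p _ => hρty p)
  set θF := Function.update idSub (0, Ty.arrow σ .base) F with hθFdef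
  have hθFty : ∀ p, HasTy (θF p) p.2 := by
    rw [hθFdef]; exact update_hasTy idSub_hasTy hFty
  set AB := andList (((Finset.univ : Finset σ.sem).toList).map
      (fun a => Tm.app (vr 0 (.arrow σ .base)) ((quoteEq σ).1 a))) with hABdef
  have s3 : LamEq (Tm.app ALL F) (substAux θF AB) := by
    rw [show ALL = Tm.lam 0 (.arrow σ .base) AB from rfl]
    exact LamEq.beta (HasTy.app hALLty hFty)
  have e4 : substAux θF AB = andList (((Finset.univ : Finset σ.sem).toList).map
      (fun a => Tm.app F (substAux θF (quote σ a)))) := by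
    rw [hABdef, substAux_andList, List.map_map]
    congr 1
    apply List.map_congr_left
    intro a _
    show substAux θF (Tm.app (vr 0 (.arrow σ .base)) ((quoteEq σ).1 a)) = _
    rw [substAux_app, substAux_vr, hθFdef, Function.update_self, quoteEq_fst]
  rw [e4] at s3
  -- unfold F as a lambda
  set M := freshIdx ρ 2 σ KB with hMdef
  set ρ₂ := Function.update ρ (2, σ) (vr M σ) with hρ₂def
  have hρ₂ty : ∀ p, HasTy (ρ₂ p) p.2 := by
    rw [hρ₂def]; exact update_hasTy hρty hasTy_vr
  set BODY := substAux ρ₂ KB with hBODYdef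
  have hBODYty : HasTy BODY .base := substAux_hasTy hKBty (fun p _ => hρ₂ty p)
  have hFlam : F = Tm.lam M σ BODY := by
    rw [hFdef0, hKdef]
    exact substAux_lam
  have hpa : ∀ a ∈ (Finset.univ : Finset σ.sem).toList,
      LamEq (Tm.app F (substAux θF (quote σ a)))
        (Tm.app (.app (eqTm τ) (.app u (quote σ a))) (.app v (quote σ a))) := by
    intro a _
    have hQty : HasTy (substAux θF (quote σ a)) σ :=
      substAux_hasTy (hasTy_quote a) (fun p _ => hθFty p)
    have s5a : LamEq (Tm.app F (substAux θF (quote σ a))) (Tm.app F (quote σ a)) :=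
      lamEq_appR (substAux_closed_lamEq (hasTy_quote a) (fv_quote a) θF)
        (HasTy.app hFty hQty)
    set θa := Function.update idSub (M, σ) (quote σ a) with hθadef
    have hθaty : ∀ p, HasTy (θa p) p.2 := by
      rw [hθadef]; exact update_hasTy idSub_hasTy (hasTy_quote a)
    have s5b : LamEq (Tm.app F (quote σ a)) (substAux θa BODY) := by
      rw [hFlam]
      exact LamEq.beta (HasTy.app (HasTy.lam hBODYty) (hasTy_quote a))
    have s5c : LamEq (substAux θa BODY) (substAux (fun p => substAux θa (ρ₂ p)) KB) := by
      rw [hBODYdef]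
      exact lamEq_comp hKBty (fun p _ => hρ₂ty p) hθaty
    set ρt := Function.update ρ (2, σ) (quote σ a) with hρtdef
    have hρtty : ∀ p, HasTy (ρt p) p.2 := by
      rw [hρtdef]; exact update_hasTy hρty (hasTy_quote a)
    have s5d : LamEq (substAux (fun p => substAux θa (ρ₂ p)) KB) (substAux ρt KB) := by
      apply substAux_pointwise_lamEq hKBty
      · intro p _
        exact substAux_hasTy (hρ₂ty p) (fun q _ => hθaty q)
      · intro p _; exact hρtty p
      · intro p hp
        by_cases hp2 : p = (2, σ)
        · subst hp2
          rw [hρ₂def, Function.update_self, substAux_vr, hθadef, Function.update_self,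
            hρtdef, Function.update_self]
        · rw [hρ₂def, Function.update_of_ne hp2, hρtdef, Function.update_of_ne hp2]
          apply db0_substAux_id
          intro q hq
          have hfr := freshIdx_spec (ρ := ρ) (n := 2) (σ := σ) (s := KB) p
            (Finset.mem_erase.2 ⟨hp2, hp⟩) q hq
          have hne : q ≠ (M, σ) := by
            intro hc
            exact hfr ((congrArg Prod.fst hc).trans hMdef)
          rw [hθadef, Function.update_of_ne hne]
          rfl
    have e5e : substAux ρt KB = Tm.app (.app (substAux ρt (eqTm τ)) (.app u (quote σ a)))
        (.app v (quote σ a)) := by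
      rw [hKBdef]
      simp only [substAux_app, substAux_vr]
      rw [hρtdef]
      rw [Function.update_of_ne (show ((0 : ℕ), A) ≠ ((2 : ℕ), σ) by simp),
        Function.update_of_ne (show ((1 : ℕ), A) ≠ ((2 : ℕ), σ) by simp),
        Function.update_self, hρdef,
        Function.update_of_ne (show ((0 : ℕ), A) ≠ ((1 : ℕ), A) by simp),
        Function.update_self, Function.update_self]
    have hsub_eq_ty : HasTy (substAux ρt (eqTm τ)) (.arrow τ (.arrow τ .base)) :=
      substAux_hasTy (hasTy_eqTm τ) (fun p _ => hρtty p)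
    have s5f : LamEq (Tm.app (.app (substAux ρt (eqTm τ)) (.app u (quote σ a)))
        (.app v (quote σ a)))
        (Tm.app (.app (eqTm τ) (.app u (quote σ a))) (.app v (quote σ a))) := by
      apply lamEq_appL (σ := .base)
      · apply lamEq_appL (σ := .arrow τ .base)
        · exact substAux_closed_lamEq (hasTy_eqTm τ) (fv_eqTm τ) ρt
        · exact HasTy.app hsub_eq_ty (HasTy.app hu (hasTy_quote a))
      · exact HasTy.app (HasTy.app hsub_eq_ty (HasTy.app hu (hasTy_quote a)))
          (HasTy.app hv (hasTy_quote a))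
    rw [← e5e] at s5f
    exact s5a.trans (s5b.trans (s5c.trans (s5d.trans s5f)))
  have s6 : LamEq (andList (((Finset.univ : Finset σ.sem).toList).map
      (fun a => Tm.app F (substAux θF (quote σ a)))))
      (andList (((Finset.univ : Finset σ.sem).toList).map
        (fun a => Tm.app (.app (eqTm τ) (.app u (quote σ a))) (.app v (quote σ a))))) := by
    apply lamEq_andList (forall₂_map_same hpa)
    intro w hw
    rcases List.mem_map.1 hw with ⟨a, _, haw⟩
    subst haw
    exact HasTy.app hFty (substAux_hasTy (hasTy_quote a) (fun p _ => hθFty p))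
  exact ((h1.trans s2).trans s3).trans s6
end EqArrow
section MBeta

def appList : Tm → List Tm → Tm
  | t, [] => t
  | t, u :: l => appList (.app t u) l

@[simp] theorem appList_nil {t : Tm} : appList t [] = t := rfl
@[simp] theorem appList_cons {t u : Tm} {l : List Tm} :
    appList t (u :: l) = appList (.app t u) l := rfl

noncomputable def quoteTup : ∀ (l : List Ty), Tup l → List Tm
  | [], _ => []
  | σ :: l, b => quote σ b.1 :: quoteTup l b.2

noncomputable def updTup : (ℕ × Ty → Tm) → ℕ → ∀ (l : List Ty), Tup l → (ℕ × Ty → Tm)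
  | ρ, _, [], _ => ρ
  | ρ, k, σ :: l, b => updTup (Function.update ρ (k, σ) (quote σ b.1)) (k + 1) l b.2

def GoodSub (ρ : ℕ × Ty → Tm) : Prop :=
  ∀ p, (fv (ρ p) = ∅ ∧ HasTy (ρ p) p.2) ∨ ρ p = vr p.1 p.2

theorem goodSub_idSub : GoodSub idSub := fun p => Or.inr rfl

theorem goodSub_hasTy {ρ : ℕ × Ty → Tm} (h : GoodSub ρ) : ∀ p, HasTy (ρ p) p.2 := by
  intro p
  rcases h p with ⟨_, h2⟩ | h2
  · exact h2
  · rw [h2]; exact hasTy_vr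

theorem goodSub_update {ρ : ℕ × Ty → Tm} (h : GoodSub ρ) {k : ℕ} {σ : Ty} (a : σ.sem) :
    GoodSub (Function.update ρ (k, σ) (quote σ a)) := by
  intro p
  by_cases hp : p = (k, σ)
  · subst hp; rw [Function.update_self]
    exact Or.inl ⟨fv_quote a, hasTy_quote a⟩
  · rw [Function.update_of_ne hp]; exact h p

theorem goodSub_updTup : ∀ (l : List Ty) (c : Tup l) (ρ : ℕ × Ty → Tm) (k : ℕ),
    GoodSub ρ → GoodSub (updTup ρ k l c) := by
  intro l
  induction l with
  | nil => intro c ρ k h; exact h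
  | cons σ l ih => intro c ρ k h; exact ih c.2 _ (k + 1) (goodSub_update h c.1)

theorem updTup_lower : ∀ (l : List Ty) (c : Tup l) (ρ : ℕ × Ty → Tm) (k : ℕ) (p : ℕ × Ty),
    p.1 < k → updTup ρ k l c p = ρ p := by
  intro l
  induction l with
  | nil => intro c ρ k p _; rfl
  | cons σ l ih =>
      intro c ρ k p hp
      show updTup (Function.update ρ (k, σ) (quote σ c.1)) (k + 1) l c.2 p = ρ p
      rw [ih c.2 _ (k + 1) p (by omega)]
      rw [Function.update_of_ne (by intro hc; rw [hc] at hp; simp at hp)]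

theorem appList_hasTy_exists : ∀ (l : List Tm) {s : Tm} {σ : Ty},
    HasTy (appList s l) σ → ∃ υ, HasTy s υ := by
  intro l
  induction l with
  | nil => intro s σ h; exact ⟨σ, h⟩
  | cons u l ih =>
      intro s σ h
      rcases ih (s := .app s u) h with ⟨υ, hυ⟩
      cases hυ with | app h1 h2 => exact ⟨_, h1⟩

theorem lamEq_appList : ∀ (l : List Tm) {s t : Tm} {σ : Ty}, LamEq s t →
    HasTy (appList s l) σ → LamEq (appList s l) (appList t l) := by
  intro l
  induction l with
  | nil => intro s t σ h _; exact h
  | cons u l ih =>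
      intro s t σ h hty
      simp only [appList_cons] at hty ⊢
      rcases appList_hasTy_exists l hty with ⟨υ, hυ⟩
      exact ih (lamEq_appL h hυ) hty

theorem hasTy_appList_quoteTup : ∀ (l : List Ty) (c : Tup l) {s : Tm},
    HasTy s (mkArrow l) → HasTy (appList s (quoteTup l c)) .base := by
  intro l
  induction l with
  | nil => intro c s h; exact h
  | cons σ l ih =>
      intro c s h
      exact ih c.2 (HasTy.app h (hasTy_quote c.1))

theorem mbeta : ∀ (l : List Ty) (c : Tup l) (k : ℕ) (body : Tm) (ρ : ℕ × Ty → Tm),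
    HasTy body .base → GoodSub ρ →
    LamEq (appList (substAux ρ (mkLams l k body)) (quoteTup l c))
      (substAux (updTup ρ k l c) body) := by
  intro l
  induction l with
  | nil =>
      intro c k body ρ hbody hρ
      exact LamEq.refl (σ := .base) (substAux_hasTy hbody (fun p _ => goodSub_hasTy hρ p))
  | cons σ l ih =>
      intro c k body ρ hbody hρ
      show LamEq (appList (Tm.app (substAux ρ (.lam k σ (mkLams l (k + 1) body)))
        (quote σ c.1)) (quoteTup l c.2)) _
      have hWty : HasTy (mkLams l (k + 1) body) (mkArrow l) := hasTy_mkLams l (k + 1) hbody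
      have hρ'ty : ∀ p, HasTy (Function.update ρ (k, σ)
          (vr (freshIdx ρ k σ (mkLams l (k + 1) body)) σ) p) p.2 :=
        update_hasTy (goodSub_hasTy hρ) hasTy_vr
      have hsub'ty : HasTy (substAux (Function.update ρ (k, σ)
          (vr (freshIdx ρ k σ (mkLams l (k + 1) body)) σ)) (mkLams l (k + 1) body))
          (mkArrow l) :=
        substAux_hasTy hWty (fun p _ => hρ'ty p)
      have r1 : LamEq (Tm.app (substAux ρ (.lam k σ (mkLams l (k + 1) body))) (quote σ c.1))
          (substAux (Function.update idSub (freshIdx ρ k σ (mkLams l (k + 1) body), σ)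
            (quote σ c.1))
            (substAux (Function.update ρ (k, σ)
              (vr (freshIdx ρ k σ (mkLams l (k + 1) body)) σ)) (mkLams l (k + 1) body))) := by
        rw [substAux_lam]
        exact LamEq.beta (HasTy.app (HasTy.lam hsub'ty) (hasTy_quote c.1))
      have r2 : LamEq (substAux (Function.update idSub
            (freshIdx ρ k σ (mkLams l (k + 1) body), σ) (quote σ c.1))
            (substAux (Function.update ρ (k, σ)
              (vr (freshIdx ρ k σ (mkLams l (k + 1) body)) σ)) (mkLams l (k + 1) body)))
          (substAux (fun p => substAux (Function.update idSub
            (freshIdx ρ k σ (mkLams l (k + 1) body), σ) (quote σ c.1))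
            (Function.update ρ (k, σ)
              (vr (freshIdx ρ k σ (mkLams l (k + 1) body)) σ) p)) (mkLams l (k + 1) body)) :=
        lamEq_comp hWty (fun p _ => hρ'ty p)
          (update_hasTy idSub_hasTy (hasTy_quote c.1))
      have r3 : LamEq (substAux (fun p => substAux (Function.update idSub
            (freshIdx ρ k σ (mkLams l (k + 1) body), σ) (quote σ c.1))
            (Function.update ρ (k, σ)
              (vr (freshIdx ρ k σ (mkLams l (k + 1) body)) σ) p)) (mkLams l (k + 1) body))
          (substAux (Function.update ρ (k, σ) (quote σ c.1)) (mkLams l (k + 1) body)) := by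
        apply substAux_pointwise_lamEq hWty
        · intro p _
          exact substAux_hasTy (hρ'ty p)
            (fun q _ => update_hasTy idSub_hasTy (hasTy_quote c.1) q)
        · intro p _; exact update_hasTy (goodSub_hasTy hρ) (hasTy_quote c.1) p
        · intro p hp
          by_cases hpk : p = (k, σ)
          · subst hpk
            rw [Function.update_self, substAux_vr, Function.update_self,
              Function.update_self]
          · rw [Function.update_of_ne hpk, Function.update_of_ne hpk]
            rcases hρ p with ⟨hc, _⟩ | hv
            · exact db0_substAux_closed hc _
            · rw [hv, substAux_vr]
              have hfr := freshIdx_spec (ρ := ρ) (n := k) (σ := σ)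
                (s := mkLams l (k + 1) body) p (Finset.mem_erase.2 ⟨hpk, hp⟩)
                (p.1, p.2) (by rw [hv]; simp)
              rw [Function.update_of_ne (by intro hc; exact hfr (congrArg Prod.fst hc))]
              rfl
      have hr123 := r1.trans (r2.trans r3)
      have happty : HasTy (appList (Tm.app (substAux ρ (.lam k σ (mkLams l (k + 1) body)))
          (quote σ c.1)) (quoteTup l c.2)) .base := by
        apply hasTy_appList_quoteTup
        apply HasTy.app _ (hasTy_quote c.1)
        rw [substAux_lam]
        exact HasTy.lam hsub'ty
      have step := lamEq_appList (quoteTup l c.2) hr123 happty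
      exact step.trans (ih c.2 (k + 1) body _ hbody (goodSub_update hρ c.1))

end MBeta
section Ground

noncomputable def eqConjQC : ∀ (l : List Ty), Tup l → Tup l → List Tm
  | [], _, _ => []
  | σ :: l, c, b => (Tm.app (.app (eqTm σ) (quote σ c.1)) (quote σ b.1)) :: eqConjQC l c.2 b.2

theorem eqConjQC_hasTy : ∀ (l : List Ty) (c b : Tup l), ∀ u ∈ eqConjQC l c b,
    HasTy u .base := by
  intro l
  induction l with
  | nil => intro c b u hu; exact absurd hu (by simp [eqConjQC])
  | cons σ l ih =>
      intro c b u hu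
      rcases List.mem_cons.1 hu with h | h
      · subst h
        exact HasTy.app (HasTy.app (hasTy_eqTm σ) (hasTy_quote c.1)) (hasTy_quote b.1)
      · exact ih c.2 b.2 u h

theorem substAux_eqConjQ : ∀ (l : List Ty) (b c : Tup l) (k : ℕ) (ρ : ℕ × Ty → Tm),
    GoodSub ρ →
    List.Forall₂ LamEq ((eqConjQ l k b).map (substAux (updTup ρ k l c))) (eqConjQC l c b) := by
  intro l
  induction l with
  | nil => intro b c k ρ _; exact List.Forall₂.nil
  | cons σ l ih =>
      intro b c k ρ hρ
      show List.Forall₂ LamEq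
        (substAux (updTup ρ k (σ :: l) c) (Tm.app (.app (eqTm σ) (vr k σ)) (quote σ b.1)) ::
          (eqConjQ l (k + 1) b.2).map (substAux (updTup ρ k (σ :: l) c))) _
      have hμk : updTup ρ k (σ :: l) c (k, σ) = quote σ c.1 := by
        show updTup (Function.update ρ (k, σ) (quote σ c.1)) (k + 1) l c.2 (k, σ) = _
        rw [updTup_lower l c.2 _ (k + 1) (k, σ) (by omega), Function.update_self]
      have hμty : ∀ p, HasTy (updTup ρ k (σ :: l) c p) p.2 :=
        goodSub_hasTy (goodSub_updTup (σ :: l) c ρ k hρ)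
      constructor
      · rw [substAux_app, substAux_app, substAux_vr, hμk]
        have hsETy : HasTy (substAux (updTup ρ k (σ :: l) c) (eqTm σ))
            (.arrow σ (.arrow σ .base)) :=
          substAux_hasTy (hasTy_eqTm σ) (fun p _ => hμty p)
        have inner : LamEq (Tm.app (substAux (updTup ρ k (σ :: l) c) (eqTm σ)) (quote σ c.1))
            (Tm.app (eqTm σ) (quote σ c.1)) :=
          lamEq_appL (substAux_closed_lamEq (hasTy_eqTm σ) (fv_eqTm σ) _)
            (HasTy.app hsETy (hasTy_quote c.1))
        apply lamEq_app inner
        · exact substAux_closed_lamEq (hasTy_quote b.1) (fv_quote b.1) _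
        · exact HasTy.app (HasTy.app hsETy (hasTy_quote c.1))
            (substAux_hasTy (hasTy_quote b.1) (fun p _ => hμty p))
      · exact ih b.2 c.2 (k + 1) _ (goodSub_update hρ c.1)

theorem eqConjQ_hasTy_of {l : List Ty} (h : ∀ υ ∈ l, QFacts υ) (k : ℕ) (b : Tup l) :
    ∀ u ∈ eqConjQ l k b, HasTy u .base :=
  fun u hu => (eqConjQ_facts l k b h u hu).1

theorem quote_applied (σ : Ty) (g : σ.sem) (c : Tup σ.args) :
    LamEq (appList (quote σ g) (quoteTup σ.args c))
      (orList ((((Finset.univ : Finset (Tup σ.args)).toList.filter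
          (fun b => σ.applyTup g b))).map
        (fun b => andList (eqConjQC σ.args c b)))) := by
  have hq : HasTy (quote σ g) σ := hasTy_quote g
  have hargsQ : ∀ υ ∈ σ.args, QFacts υ := fun υ _ => qFacts υ
  have hBODYty : HasTy (orList ((((Finset.univ : Finset (Tup σ.args)).toList.filter
      (fun b => σ.applyTup g b))).map
      (fun b => andList (eqConj σ.args (argData σ) 0 b)))) .base := by
    apply hasTy_orList
    intro w hw
    rcases List.mem_map.1 hw with ⟨b, _, hbw⟩
    subst hbw
    rw [eqConj_eq _ _ (argData_ok σ)]
    exact hasTy_andList (eqConjQ_hasTy_of hargsQ 0 b)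
  have hmk : quote σ g = mkLams σ.args 0
      (orList ((((Finset.univ : Finset (Tup σ.args)).toList.filter
        (fun b => σ.applyTup g b))).map
        (fun b => andList (eqConj σ.args (argData σ) 0 b)))) := by
    rw [quote_def]; rfl
  have h0 : LamEq (appList (quote σ g) (quoteTup σ.args c))
      (appList (substAux idSub (quote σ g)) (quoteTup σ.args c)) := by
    apply lamEq_appList (quoteTup σ.args c)
      (LamEq.symm (substAux_id_lamEq hq (fun p _ => rfl)))
    exact hasTy_appList_quoteTup σ.args c (by rw [mkArrow_args]; exact hq)
  have h1 : LamEq (appList (substAux idSub (quote σ g)) (quoteTup σ.args c))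
      (substAux (updTup idSub 0 σ.args c)
        (orList ((((Finset.univ : Finset (Tup σ.args)).toList.filter
          (fun b => σ.applyTup g b))).map
          (fun b => andList (eqConj σ.args (argData σ) 0 b))))) := by
    rw [hmk]
    exact mbeta σ.args c 0 _ idSub hBODYty goodSub_idSub
  have h2 : LamEq (substAux (updTup idSub 0 σ.args c)
      (orList ((((Finset.univ : Finset (Tup σ.args)).toList.filter
        (fun b => σ.applyTup g b))).map
        (fun b => andList (eqConj σ.args (argData σ) 0 b)))))
      (orList ((((Finset.univ : Finset (Tup σ.args)).toList.filter
        (fun b => σ.applyTup g b))).map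
        (fun b => andList (eqConjQC σ.args c b)))) := by
    rw [substAux_orList, List.map_map]
    apply lamEq_orList
    · apply forall₂_map_same
      intro b _
      show LamEq (substAux (updTup idSub 0 σ.args c)
        (andList (eqConj σ.args (argData σ) 0 b))) _
      rw [eqConj_eq _ _ (argData_ok σ), substAux_andList]
      apply lamEq_andList (substAux_eqConjQ σ.args b c 0 idSub goodSub_idSub)
      intro u hu
      rcases List.mem_map.1 hu with ⟨w, hw, hwu⟩
      subst hwu
      exact substAux_hasTy (eqConjQ_hasTy_of hargsQ 0 b w hw)
        (fun p _ => goodSub_hasTy (goodSub_updTup σ.args c idSub 0 goodSub_idSub) p)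
    · intro u hu
      rcases List.mem_map.1 hu with ⟨b, _, hbu⟩
      subst hbu
      show HasTy (substAux (updTup idSub 0 σ.args c)
        (andList (eqConj σ.args (argData σ) 0 b))) .base
      rw [eqConj_eq _ _ (argData_ok σ)]
      apply substAux_hasTy (hasTy_andList (eqConjQ_hasTy_of hargsQ 0 b))
      exact fun p _ => goodSub_hasTy (goodSub_updTup σ.args c idSub 0 goodSub_idSub) p
  exact (h0.trans h1).trans h2

theorem eIntro : ∀ (σ : Ty) {A : Finset Tm} {u v : Tm}, (∀ w ∈ A, HasTy w .base) →
    HasTy u σ → HasTy v σ →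
    (∀ c : Tup σ.args, Ded A (equivTm (appList u (quoteTup σ.args c))
      (appList v (quoteTup σ.args c)))) →
    Ded A (Tm.app (.app (eqTm σ) u) v) := by
  intro σ
  induction σ with
  | base =>
      intro A u v hA hu hv h
      exact dedLamEqRev (h PUnit.unit) (eqBase_applied hu hv)
        (HasTy.app (HasTy.app (hasTy_eqTm .base) hu) hv)
  | arrow σ₁ τ ih₁ ih₂ =>
      intro A u v hA hu hv h
      apply dedLamEqRev _ (eqArrow_applied hu hv)
        (HasTy.app (HasTy.app (hasTy_eqTm _) hu) hv)
      apply dedAndListI hA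
      · intro w hw
        rcases List.mem_map.1 hw with ⟨a, _, haw⟩
        subst haw
        apply ih₂ hA (HasTy.app hu (hasTy_quote a)) (HasTy.app hv (hasTy_quote a))
        intro c'
        exact h (a, c')
      · intro w hw
        rcases List.mem_map.1 hw with ⟨a, _, haw⟩
        subst haw
        exact HasTy.app (HasTy.app (hasTy_eqTm τ) (HasTy.app hu (hasTy_quote a)))
          (HasTy.app hv (hasTy_quote a))

theorem eApps : ∀ (σ : Ty) {A : Finset Tm} {u v : Tm},
    Ded A (Tm.app (.app (eqTm σ) u) v) → HasTy u σ → HasTy v σ →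
    ∀ c : Tup σ.args, Ded A (equivTm (appList u (quoteTup σ.args c))
      (appList v (quoteTup σ.args c))) := by
  intro σ
  induction σ with
  | base =>
      intro A u v h hu hv c
      exact dedLamEq h (eqBase_applied hu hv)
  | arrow σ₁ τ ih₁ ih₂ =>
      intro A u v h hu hv c
      have hand := dedLamEq h (eqArrow_applied hu hv)
      have hmem : (Tm.app (.app (eqTm τ) (.app u (quote σ₁ c.1))) (.app v (quote σ₁ c.1))) ∈
          (((Finset.univ : Finset σ₁.sem).toList).map
            (fun a => Tm.app (.app (eqTm τ) (.app u (quote σ₁ a))) (.app v (quote σ₁ a)))) :=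
        List.mem_map.2 ⟨c.1, mem_univList c.1, rfl⟩
      have hE := dedAndListE hand hmem
      exact ih₂ hE (HasTy.app hu (hasTy_quote c.1)) (HasTy.app hv (hasTy_quote c.1)) c.2

theorem dedRefl (σ : Ty) {A : Finset Tm} (hA : ∀ w ∈ A, HasTy w .base) {s : Tm}
    (hs : HasTy s σ) : Ded A (Tm.app (.app (eqTm σ) s) s) := by
  apply eIntro σ hA hs hs
  intro c
  have hw : HasTy (appList s (quoteTup σ.args c)) .base :=
    hasTy_appList_quoteTup σ.args c (by rw [mkArrow_args]; exact hs)
  have hA' : ∀ w ∈ insert (appList s (quoteTup σ.args c)) A, HasTy w .base := by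
    intro w hw'
    rcases Finset.mem_insert.1 hw' with h | h
    · subst h; exact hw
    · exact hA w h
  exact dedEquivI (Ded.ded (dedHyp hA' (Finset.mem_insert_self _ _)))
    (Ded.ded (dedHyp hA' (Finset.mem_insert_self _ _)))

theorem eqConjQC_refl : ∀ (l : List Ty) (c : Tup l), ∀ u ∈ eqConjQC l c c, Ded ∅ u := by
  intro l
  induction l with
  | nil => intro c u hu; exact absurd hu (by simp [eqConjQC])
  | cons σ l ih =>
      intro c u hu
      rcases List.mem_cons.1 hu with h | h
      · subst h
        exact dedRefl σ (by simp) (hasTy_quote c.1)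
      · exact ih c.2 u h

theorem mem_univListT {l : List Ty} (c : Tup l) : c ∈ (Finset.univ : Finset (Tup l)).toList :=
  Finset.mem_toList.2 (Finset.mem_univ c)

theorem applyTup_ne : ∀ (σ : Ty) (a b : σ.sem), a ≠ b →
    ∃ c : Tup σ.args, σ.applyTup a c ≠ σ.applyTup b c := by
  intro σ
  induction σ with
  | base => intro a b h; exact ⟨PUnit.unit, h⟩
  | arrow σ₁ τ ih₁ ih₂ =>
      intro a b h
      have : ∃ x, a x ≠ b x := by
        by_contra hc
        push_neg at hc
        exact h (funext hc)
      rcases this with ⟨x, hx⟩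
      rcases ih₂ (a x) (b x) hx with ⟨c', hc'⟩
      exact ⟨(x, c'), hc'⟩

noncomputable def appQ (σ : Ty) (g : σ.sem) (c : Tup σ.args) : Tm :=
  appList (quote σ g) (quoteTup σ.args c)

theorem hasTy_appQ {σ : Ty} (g : σ.sem) (c : Tup σ.args) : HasTy (appQ σ g c) .base :=
  hasTy_appList_quoteTup σ.args c (by rw [mkArrow_args]; exact hasTy_quote g)

theorem eqConjQC_refute : ∀ (l : List Ty),
    (∀ υ ∈ l, ∀ a b : υ.sem, a ≠ b →
      Ded ∅ (negTm (Tm.app (.app (eqTm υ) (quote υ a)) (quote υ b)))) →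
    ∀ (c b : Tup l), b ≠ c → ∀ (A : Finset Tm), (∀ w ∈ A, HasTy w .base) →
    Ded A (andList (eqConjQC l c b)) → Ded A botTm := by
  intro l
  induction l with
  | nil =>
      intro _ c b hbc A _ _
      exact absurd (Subsingleton.elim (α := PUnit) b c) hbc
  | cons σ l ih =>
      intro hdis c b hbc A hA hand
      by_cases h1 : b.1 = c.1
      · have h2 : b.2 ≠ c.2 := by
          intro hc
          exact hbc (Prod.ext h1 hc)
        apply ih (fun υ hυ => hdis υ (by simp [hυ])) c.2 b.2 h2 A hA
        apply dedAndListI hA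
        · intro u hu
          exact dedAndListE hand (by simp [eqConjQC, hu])
        · exact eqConjQC_hasTy l c.2 b.2
      · have hE : Ded A (Tm.app (.app (eqTm σ) (quote σ c.1)) (quote σ b.1)) :=
          dedAndListE hand (by simp [eqConjQC])
        have hN : Ded ∅ (negTm (Tm.app (.app (eqTm σ) (quote σ c.1)) (quote σ b.1))) :=
          hdis σ (by simp) c.1 b.1 (fun hc => h1 hc.symm)
        exact Ded.mp (dedWeaken hN (Finset.empty_subset A) hA) hE

theorem ground_dis : ∀ (N : ℕ) (σ : Ty), tySize σ ≤ N →
    (∀ (g : σ.sem) (c : Tup σ.args),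
      (σ.applyTup g c = true → Ded ∅ (appQ σ g c)) ∧
      (σ.applyTup g c = false → Ded ∅ (negTm (appQ σ g c)))) ∧
    (∀ a b : σ.sem, a ≠ b →
      Ded ∅ (negTm (Tm.app (.app (eqTm σ) (quote σ a)) (quote σ b)))) := by
  intro N
  induction N with
  | zero => intro σ h; exact absurd h (by cases σ <;> simp [tySize])
  | succ N IH =>
      intro σ hN
      have hdisArgs : ∀ υ ∈ σ.args, ∀ a b : υ.sem, a ≠ b →
          Ded ∅ (negTm (Tm.app (.app (eqTm υ) (quote υ a)) (quote υ b))) :=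
        fun υ hυ => (IH υ (by have := args_size σ υ hυ; omega)).2
      have hlistTy : ∀ (g : σ.sem) (c : Tup σ.args),
          ∀ w ∈ (((Finset.univ : Finset (Tup σ.args)).toList.filter
            (fun b => σ.applyTup g b))).map (fun b => andList (eqConjQC σ.args c b)),
          HasTy w .base := by
        intro g c w hw
        rcases List.mem_map.1 hw with ⟨b, _, hbw⟩
        subst hbw
        exact hasTy_andList (eqConjQC_hasTy σ.args c b)
      have hground : ∀ (g : σ.sem) (c : Tup σ.args),
          (σ.applyTup g c = true → Ded ∅ (appQ σ g c)) ∧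
          (σ.applyTup g c = false → Ded ∅ (negTm (appQ σ g c))) := by
        intro g c
        constructor
        · intro h
          apply dedLamEqRev _ (quote_applied σ g c) (hasTy_appQ g c)
          apply dedOrListI (u := andList (eqConjQC σ.args c c))
          · exact dedAndListI (by simp) (eqConjQC_refl σ.args c) (eqConjQC_hasTy σ.args c c)
          · exact List.mem_map.2 ⟨c, List.mem_filter.2 ⟨mem_univListT c, by rw [h]⟩, rfl⟩
          · exact hlistTy g c
        · intro h
          apply dedLamEqRev _ (lamEq_negC (quote_applied σ g c) (hasTy_appQ g c))
            (hasTy_neg (hasTy_appQ g c))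
          apply dedOrListRefute (by simp) (hlistTy g c)
          intro u hu
          rcases List.mem_map.1 hu with ⟨b, hb, hbu⟩
          subst hbu
          have hbf : σ.applyTup g b = true := (List.mem_filter.1 hb).2
          have hbc : b ≠ c := by
            intro hc; subst hc; rw [h] at hbf; exact absurd hbf (by simp)
          have hA : ∀ w ∈ insert (andList (eqConjQC σ.args c b)) (∅ : Finset Tm),
              HasTy w .base := by
            intro w hw
            rcases Finset.mem_insert.1 hw with h' | h'
            · subst h'; exact hasTy_andList (eqConjQC_hasTy σ.args c b)
            · exact absurd h' (Finset.notMem_empty w)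
          exact eqConjQC_refute σ.args hdisArgs c b hbc _ hA
            (dedHyp hA (Finset.mem_insert_self _ _))
      refine ⟨hground, ?_⟩
      intro a b hab
      rcases applyTup_ne σ a b hab with ⟨c, hc⟩
      apply dedNegI
      have hEty : HasTy (Tm.app (.app (eqTm σ) (quote σ a)) (quote σ b)) .base :=
        HasTy.app (HasTy.app (hasTy_eqTm σ) (hasTy_quote a)) (hasTy_quote b)
      have hA : ∀ w ∈ insert (Tm.app (.app (eqTm σ) (quote σ a)) (quote σ b)) (∅ : Finset Tm),
          HasTy w .base := by
        intro w hw
        rcases Finset.mem_insert.1 hw with h' | h'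
        · subst h'; exact hEty
        · exact absurd h' (Finset.notMem_empty w)
      have hEq := eApps σ (dedHyp hA (Finset.mem_insert_self _ _))
        (hasTy_quote a) (hasTy_quote b) c
      by_cases hva : σ.applyTup a c = true
      · have hvb : σ.applyTup b c = false := by
          cases hb' : σ.applyTup b c
          · rfl
          · rw [hva, hb'] at hc; exact absurd rfl hc
        have hga := ((hground a c).1 hva)
        have hgb := ((hground b c).2 hvb)
        have h1 : Ded _ (appQ σ b c) := dedEquivMp hEq
          (dedWeaken hga (Finset.empty_subset _) hA)
        exact Ded.mp (dedWeaken hgb (Finset.empty_subset _) hA) h1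
      · have hva' : σ.applyTup a c = false := by
          cases ha' : σ.applyTup a c
          · rfl
          · exact absurd ha' hva
        have hvb : σ.applyTup b c = true := by
          cases hb' : σ.applyTup b c
          · rw [hva', hb'] at hc; exact absurd rfl hc
          · rfl
        have hga := ((hground a c).2 hva')
        have hgb := ((hground b c).1 hvb)
        have h1 : Ded _ (appQ σ a c) := dedEquivMpr hEq
          (dedWeaken hgb (Finset.empty_subset _) hA)
        exact Ded.mp (dedWeaken hga (Finset.empty_subset _) hA) h1

theorem dedGroundPos {σ : Ty} {g : σ.sem} {c : Tup σ.args} (h : σ.applyTup g c = true) :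
    Ded ∅ (appQ σ g c) := ((ground_dis (tySize σ) σ le_rfl).1 g c).1 h
theorem dedGroundNeg {σ : Ty} {g : σ.sem} {c : Tup σ.args} (h : σ.applyTup g c = false) :
    Ded ∅ (negTm (appQ σ g c)) := ((ground_dis (tySize σ) σ le_rfl).1 g c).2 h
theorem dedDisNe {σ : Ty} {a b : σ.sem} (h : a ≠ b) :
    Ded ∅ (negTm (Tm.app (.app (eqTm σ) (quote σ a)) (quote σ b))) :=
  (ground_dis (tySize σ) σ le_rfl).2 a b h

end Ground
section RepEnum

theorem dedQApp (σ τ : Ty) (f : (Ty.arrow σ τ).sem) (a : σ.sem) :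
    Ded ∅ (Tm.app (.app (eqTm τ) (.app (quote (.arrow σ τ) f) (quote σ a)))
      (quote τ (f a))) := by
  apply eIntro τ (by simp) (HasTy.app (hasTy_quote f) (hasTy_quote a)) (hasTy_quote (f a))
  intro c
  have hL : appList (Tm.app (quote (.arrow σ τ) f) (quote σ a)) (quoteTup τ.args c) =
      appQ (.arrow σ τ) f (a, c) := rfl
  have hR : appList (quote τ (f a)) (quoteTup τ.args c) = appQ τ (f a) c := rfl
  rw [hL, hR]
  have hval : (Ty.arrow σ τ).applyTup f (a, c) = τ.applyTup (f a) c := rfl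
  cases hv : τ.applyTup (f a) c
  · exact dedEquivSameNeg (dedGroundNeg (by rw [hval]; exact hv)) (dedGroundNeg hv)
  · exact dedEquivSame (dedGroundPos (by rw [hval]; exact hv)) (dedGroundPos hv)

def Ctx.comp : Ctx → Ctx → Ctx
  | .hole, D => D
  | .lam n σ C, D => .lam n σ (C.comp D)
  | .appL C t, D => .appL (C.comp D) t
  | .appR t C, D => .appR t (C.comp D)

theorem Ctx.comp_fill : ∀ (C D : Ctx) (s : Tm), (C.comp D).fill s = C.fill (D.fill s) := by
  intro C D s
  induction C with
  | hole => rfl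
  | lam n σ C ih => simp [Ctx.comp, Ctx.fill, ih]
  | appL C t ih => simp [Ctx.comp, Ctx.fill, ih]
  | appR t C ih => simp [Ctx.comp, Ctx.fill, ih]

theorem Ctx.comp_captures : ∀ (C D : Ctx) (p : ℕ × Ty),
    (C.comp D).captures p ↔ C.captures p ∨ D.captures p := by
  intro C D p
  induction C with
  | hole => simp [Ctx.comp, Ctx.captures]
  | lam n σ C ih => simp [Ctx.comp, Ctx.captures, ih]; tauto
  | appL C t ih => simp [Ctx.comp, Ctx.captures, ih]
  | appR t C ih => simp [Ctx.comp, Ctx.captures, ih]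

theorem dedSym {τ : Ty} (hrep : RepP τ) {A : Finset Tm} {s t : Tm}
    (hA : ∀ u ∈ A, HasTy u .base) (hs : HasTy s τ) (ht : HasTy t τ)
    (h : Ded A (Tm.app (.app (eqTm τ) s) t)) : Ded A (Tm.app (.app (eqTm τ) t) s) := by
  have := hrep A s t (Ctx.appL (Ctx.appR (eqTm τ) Ctx.hole) s) hA hs ht
    (fun p _ hc => hc) h (dedRefl τ hA hs)
  exact this

theorem dedTrans {τ : Ty} (hrep : RepP τ) {A : Finset Tm} {a b c : Tm}
    (hA : ∀ u ∈ A, HasTy u .base) (ha : HasTy a τ) (hb : HasTy b τ) (hc : HasTy c τ)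
    (h1 : Ded A (Tm.app (.app (eqTm τ) a) b)) (h2 : Ded A (Tm.app (.app (eqTm τ) b) c)) :
    Ded A (Tm.app (.app (eqTm τ) a) c) := by
  have hsym : Ded A (Tm.app (.app (eqTm τ) b) a) := dedSym hrep hA ha hb h1
  have := hrep A b a (Ctx.appL (Ctx.appR (eqTm τ) Ctx.hole) c) hA hb ha
    (fun p _ hc' => hc') hsym h2
  exact this

def EnumT (σ : Ty) : Prop := ∀ (A : Finset Tm) (s : Tm), (∀ u ∈ A, HasTy u .base) →
  HasTy s σ → Ded A (orList (((Finset.univ : Finset σ.sem).toList).map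
    (fun a => Tm.app (.app (eqTm σ) (quote σ a)) s)))

theorem hasTy_eqApp {σ : Ty} {s t : Tm} (hs : HasTy s σ) (ht : HasTy t σ) :
    HasTy (Tm.app (.app (eqTm σ) s) t) .base :=
  HasTy.app (HasTy.app (hasTy_eqTm σ) hs) ht

theorem insert_typed {A : Finset Tm} (hA : ∀ u ∈ A, HasTy u .base) {s : Tm}
    (hs : HasTy s .base) : ∀ u ∈ insert s A, HasTy u .base := by
  intro u hu
  rcases Finset.mem_insert.1 hu with h | h
  · subst h; exact hs
  · exact hA u h

theorem rep_enum : ∀ (N : ℕ) (σ : Ty), tySize σ ≤ N → RepP σ ∧ EnumT σ := by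
  intro N
  induction N with
  | zero => intro σ h; exact absurd h (by cases σ <;> simp [tySize])
  | succ N IH =>
      intro σ hN
      cases σ with
      | base =>
          constructor
          · intro A s t C hA hs ht hadm hEq hCs
            have hequiv : Ded A (equivTm s t) := dedLamEq hEq (eqBase_applied hs ht)
            exact Ded.br C hadm hequiv hCs (fill_hasTy_replace C (dedTyped hCs) hs ht)
          · intro A s hA hs
            have htyL : ∀ u ∈ (((Finset.univ : Finset (Ty.base).sem).toList).map
                (fun a => Tm.app (.app (eqTm .base) (quote .base a)) s)), HasTy u .base := by
              intro u hu
              rcases List.mem_map.1 hu with ⟨a, _, hau⟩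
              subst hau
              exact hasTy_eqApp (hasTy_quote a) hs
            apply dedCaseSplit (s := s)
            · have h1 : Ded (insert s A) (Tm.app (.app (eqTm .base) (quote .base true)) s) := by
                rw [quote_base_true]
                apply dedLamEqRev _ (eqBase_applied hasTy_top hs)
                  (hasTy_eqApp (σ := .base) hasTy_top hs)
                exact dedEquivSame (dedTopI (insert_typed hA hs))
                  (dedHyp (insert_typed hA hs) (Finset.mem_insert_self _ _))
              exact dedOrListI h1 (List.mem_map.2 ⟨true, mem_univList _, rfl⟩) htyL
            · have h1 : Ded (insert (negTm s) A)
                  (Tm.app (.app (eqTm .base) (quote .base false)) s) := by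
                rw [quote_base_false]
                apply dedLamEqRev _ (eqBase_applied hasTy_bot hs)
                  (hasTy_eqApp (σ := .base) hasTy_bot hs)
                exact dedEquivSameNeg (dedTopI (insert_typed hA (hasTy_neg hs)))
                  (dedHyp (insert_typed hA (hasTy_neg hs)) (Finset.mem_insert_self _ _))
              exact dedOrListI h1 (List.mem_map.2 ⟨false, mem_univList _, rfl⟩) htyL
      | arrow σ₁ τ =>
          have hsz₁ : tySize σ₁ ≤ N := by simp [tySize] at hN; omega
          have hszτ : tySize τ ≤ N := by simp [tySize] at hN; omega
          rcases IH σ₁ hsz₁ with ⟨hrep₁, henum₁⟩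
          rcases IH τ hszτ with ⟨hrepτ, henumτ⟩
          constructor
          · -- RepP (arrow σ₁ τ)
            intro A s t C hA hs ht hadm hEq hCs
            set S : Finset (ℕ × Ty) := (A.biUnion fv) ∪ fv s ∪ fv t with hS
            set Nf : ℕ := S.sup Prod.fst + 1 with hNf
            have hNS : (Nf, σ₁) ∉ S := fresh_not_mem
            have hNs : (Nf, σ₁) ∉ fv s := fun h => hNS (by rw [hS]; simp [h])
            have hNt : (Nf, σ₁) ∉ fv t := fun h => hNS (by rw [hS]; simp [h])
            have hNA : ∀ p ∈ A.biUnion fv, p ≠ (Nf, σ₁) := by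
              intro p hp hc
              subst hc
              exact hNS (by rw [hS]; simp [hp])
            have hEta : LamEq s (Tm.lam Nf σ₁ (.app s (vr Nf σ₁))) :=
              LamEq.symm (LamEq.eta (HasTy.lam (HasTy.app hs hasTy_vr)) hNs)
            have hEtaT : LamEq (Tm.lam Nf σ₁ (.app t (vr Nf σ₁))) t :=
              LamEq.eta (HasTy.lam (HasTy.app ht hasTy_vr)) hNt
            have hCsl : LamEq (C.fill s) (C.fill (Tm.lam Nf σ₁ (.app s (vr Nf σ₁)))) :=
              LamEq.ctx C hEta (dedTyped hCs)
            have hCs' : Ded A (C.fill (Tm.lam Nf σ₁ (.app s (vr Nf σ₁)))) :=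
              Ded.lam hCs hCsl (lamEq_hasTy hCsl (dedTyped hCs))
            -- the equation at applied terms
            have hE2 : Ded A (Tm.app (.app (eqTm τ) (.app s (vr Nf σ₁)))
                (.app t (vr Nf σ₁))) := by
              apply dedOrListE (henum₁ A (vr Nf σ₁) hA hasTy_vr)
              · intro u hu
                rcases List.mem_map.1 hu with ⟨a, _, hau⟩
                subst hau
                have hA' := insert_typed hA
                  (hasTy_eqApp (hasTy_quote a) (hasTy_vr (n := Nf) (σ := σ₁)))
                have hAnd := dedLamEq
                  (Ded.weak (hasTy_eqApp (hasTy_quote a) (hasTy_vr (n := Nf) (σ := σ₁))) hEq)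
                  (eqArrow_applied hs ht)
                have hEa := dedAndListE hAnd (List.mem_map.2 ⟨a, mem_univList a, rfl⟩)
                have hhyp : Ded (insert (Tm.app (.app (eqTm σ₁) (quote σ₁ a)) (vr Nf σ₁)) A)
                    (Tm.app (.app (eqTm σ₁) (quote σ₁ a)) (vr Nf σ₁)) :=
                  dedHyp hA' (Finset.mem_insert_self _ _)
                have step1 := hrep₁ _ (quote σ₁ a) (vr Nf σ₁)
                  (Ctx.appL (Ctx.appR (eqTm τ) (Ctx.appR s Ctx.hole))
                    (Tm.app t (quote σ₁ a)))
                  hA' (hasTy_quote a) hasTy_vr (fun p _ hc => hc) hhyp hEa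
                have step2 := hrep₁ _ (quote σ₁ a) (vr Nf σ₁)
                  (Ctx.appR (Tm.app (eqTm τ) (Tm.app s (vr Nf σ₁))) (Ctx.appR t Ctx.hole))
                  hA' (hasTy_quote a) hasTy_vr (fun p _ hc => hc) hhyp step1
                exact step2
              · exact hasTy_eqApp (HasTy.app hs hasTy_vr) (HasTy.app ht hasTy_vr)
            -- replace inside the composed context
            have hDadm : (C.comp (Ctx.lam Nf σ₁ Ctx.hole)).Admissible A := by
              intro p hp hc
              rw [Ctx.comp_captures] at hc
              rcases hc with hc | hc
              · exact hadm p hp hc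
              · rcases hc with hc | hc
                · exact hNA p hp hc
                · exact hc
            have hDs : Ded A ((C.comp (Ctx.lam Nf σ₁ Ctx.hole)).fill (Tm.app s (vr Nf σ₁))) := by
              rw [Ctx.comp_fill]
              exact hCs'
            have hDt := hrepτ A (Tm.app s (vr Nf σ₁)) (Tm.app t (vr Nf σ₁))
              (C.comp (Ctx.lam Nf σ₁ Ctx.hole)) hA (HasTy.app hs hasTy_vr)
              (HasTy.app ht hasTy_vr) hDadm hE2 hDs
            rw [Ctx.comp_fill] at hDt
            have hCtl : LamEq (C.fill (Tm.lam Nf σ₁ (.app t (vr Nf σ₁)))) (C.fill t) :=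
              LamEq.ctx C hEtaT (dedTyped hDt)
            exact Ded.lam hDt hCtl (fill_hasTy_replace C (dedTyped hCs) hs ht)
          · -- EnumT (arrow σ₁ τ)
            intro A s hA hs
            have htyGoalL : ∀ u ∈ (((Finset.univ : Finset (Ty.arrow σ₁ τ).sem).toList).map
                (fun a => Tm.app (.app (eqTm (.arrow σ₁ τ)) (quote (.arrow σ₁ τ) a)) s)),
                HasTy u .base := by
              intro u hu
              rcases List.mem_map.1 hu with ⟨f, _, hfu⟩
              subst hfu
              exact hasTy_eqApp (hasTy_quote f) hs
            letI : DecidableEq σ₁.sem := Classical.decEq _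
            have gty : ∀ (f : (Ty.arrow σ₁ τ).sem) (x : σ₁.sem),
                HasTy (Tm.app (.app (eqTm τ) (quote τ (f x))) (.app s (quote σ₁ x))) .base :=
              fun f x => hasTy_eqApp (hasTy_quote (f x)) (HasTy.app hs (hasTy_quote x))
            have key : ∀ (L : List σ₁.sem), L.Nodup →
                Ded A (orList (((Finset.univ : Finset (Ty.arrow σ₁ τ).sem).toList).map
                  (fun f => andList (L.map (fun a =>
                    Tm.app (.app (eqTm τ) (quote τ (f a))) (.app s (quote σ₁ a))))))) := by
              intro L
              induction L with
              | nil =>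
                  intro _
                  rcases List.exists_mem_of_ne_nil _ (univList_ne_nil (.arrow σ₁ τ)) with ⟨f, hf⟩
                  apply dedOrListI (u := topTm) (dedTopI hA)
                  · exact List.mem_map.2 ⟨f, hf, rfl⟩
                  · intro u hu
                    rcases List.mem_map.1 hu with ⟨f', _, hfu⟩
                    subst hfu
                    exact hasTy_top
              | cons a L ihL =>
                  intro hnd
                  have ha : a ∉ L := (List.nodup_cons.1 hnd).1
                  have hbase := ihL (List.nodup_cons.1 hnd).2
                  have htau := henumτ A (Tm.app s (quote σ₁ a)) hA
                    (HasTy.app hs (hasTy_quote a))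
                  have htyG : ∀ u ∈ (((Finset.univ : Finset (Ty.arrow σ₁ τ).sem).toList).map
                      (fun f => andList ((a :: L).map (fun x =>
                        Tm.app (.app (eqTm τ) (quote τ (f x))) (.app s (quote σ₁ x)))))),
                      HasTy u .base := by
                    intro u hu
                    rcases List.mem_map.1 hu with ⟨f, _, hfu⟩
                    subst hfu
                    apply hasTy_andList
                    intro w hw
                    rcases List.mem_map.1 hw with ⟨x, _, hxw⟩
                    subst hxw
                    exact gty f x
                  apply dedOrListE hbase _ (hasTy_orList htyG)
                  intro u hu
                  rcases List.mem_map.1 hu with ⟨f, _, hfu⟩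
                  subst hfu
                  have huTy : HasTy (andList (L.map (fun x =>
                      Tm.app (.app (eqTm τ) (quote τ (f x))) (.app s (quote σ₁ x))))) .base := by
                    apply hasTy_andList
                    intro w hw
                    rcases List.mem_map.1 hw with ⟨x, _, hxw⟩
                    subst hxw
                    exact gty f x
                  have hA1 := insert_typed hA huTy
                  apply dedOrListE (Ded.weak huTy htau) _ (hasTy_orList htyG)
                  intro v hv
                  rcases List.mem_map.1 hv with ⟨b, _, hbv⟩
                  subst hbv
                  have hvTy : HasTy (Tm.app (.app (eqTm τ) (quote τ b))
                      (.app s (quote σ₁ a))) .base :=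
                    hasTy_eqApp (hasTy_quote b) (HasTy.app hs (hasTy_quote a))
                  have hA2 := insert_typed hA1 hvTy
                  have hconj : Ded (insert (Tm.app (.app (eqTm τ) (quote τ b))
                      (.app s (quote σ₁ a)))
                      (insert (andList (L.map (fun x =>
                        Tm.app (.app (eqTm τ) (quote τ (f x))) (.app s (quote σ₁ x))))) A))
                      (andList ((a :: L).map (fun x =>
                        Tm.app (.app (eqTm τ) (quote τ (Function.update f a b x)))
                          (.app s (quote σ₁ x))))) := by
                    apply dedAndListI hA2
                    · intro w hw
                      rcases List.mem_map.1 hw with ⟨x, hx, hxw⟩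
                      subst hxw
                      rcases List.mem_cons.1 hx with hx' | hx'
                      · subst hx'
                        rw [show Function.update f x b x = b from Function.update_self x b f]
                        exact dedHyp hA2 (Finset.mem_insert_self _ _)
                      · have hxa : x ≠ a := fun hcx => ha (hcx ▸ hx')
                        rw [show Function.update f a b x = f x from
                          Function.update_of_ne hxa b f]
                        apply dedWeaken (dedAndListE (dedHyp hA1 (Finset.mem_insert_self _ _))
                          (List.mem_map.2 ⟨x, hx', rfl⟩))
                        · exact Finset.subset_insert _ _
                        · exact hA2
                    · intro w hw
                      rcases List.mem_map.1 hw with ⟨x, _, hxw⟩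
                      subst hxw
                      exact gty (Function.update f a b) x
                  exact dedOrListI hconj
                    (List.mem_map.2 ⟨Function.update f a b, mem_univList _, rfl⟩) htyG
            have hkey := key ((Finset.univ : Finset σ₁.sem).toList) (Finset.nodup_toList _)
            apply dedOrListE hkey _ (hasTy_orList htyGoalL)
            intro u hu
            rcases List.mem_map.1 hu with ⟨f, _, hfu⟩
            subst hfu
            have huTy : HasTy (andList ((((Finset.univ : Finset σ₁.sem).toList)).map
                (fun x => Tm.app (.app (eqTm τ) (quote τ (f x))) (.app s (quote σ₁ x)))))
                .base := by
              apply hasTy_andList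
              intro w hw
              rcases List.mem_map.1 hw with ⟨x, _, hxw⟩
              subst hxw
              exact gty f x
            have hA' := insert_typed hA huTy
            apply dedOrListI (u := Tm.app (.app (eqTm (.arrow σ₁ τ)) (quote (.arrow σ₁ τ) f)) s)
              _ (List.mem_map.2 ⟨f, mem_univList f, rfl⟩) htyGoalL
            apply dedLamEqRev _ (eqArrow_applied (hasTy_quote f) hs)
              (hasTy_eqApp (hasTy_quote f) hs)
            apply dedAndListI hA'
            · intro w hw
              rcases List.mem_map.1 hw with ⟨a, _, haw⟩
              subst haw
              have h1 : Ded (insert (andList ((((Finset.univ : Finset σ₁.sem).toList)).map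
                  (fun x => Tm.app (.app (eqTm τ) (quote τ (f x))) (.app s (quote σ₁ x))))) A)
                  (Tm.app (.app (eqTm τ) (.app (quote (.arrow σ₁ τ) f) (quote σ₁ a)))
                    (quote τ (f a))) :=
                dedWeaken (dedQApp σ₁ τ f a) (Finset.empty_subset _) hA'
              have h2 := dedAndListE (dedHyp hA' (Finset.mem_insert_self _ _))
                (List.mem_map.2 ⟨a, mem_univList a, rfl⟩)
              exact dedTrans hrepτ hA'
                (HasTy.app (hasTy_quote f) (hasTy_quote a)) (hasTy_quote (f a))
                (HasTy.app hs (hasTy_quote a)) h1 h2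
            · intro w hw
              rcases List.mem_map.1 hw with ⟨a, _, haw⟩
              subst haw
              exact hasTy_eqApp (HasTy.app (hasTy_quote f) (hasTy_quote a))
                (HasTy.app hs (hasTy_quote a))

end RepEnum
section Main

theorem beta_quote {ρ : ℕ × Ty → Tm} (hρ : GoodSub ρ) {body : Tm} {τb : Ty}
    (hbody : HasTy body τb) (n : ℕ) (σ₀ : Ty) (a : σ₀.sem) :
    LamEq (Tm.app (substAux ρ (.lam n σ₀ body)) (quote σ₀ a))
      (substAux (Function.update ρ (n, σ₀) (quote σ₀ a)) body) := by
  have hρ'ty : ∀ p, HasTy (Function.update ρ (n, σ₀)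
      (vr (freshIdx ρ n σ₀ body) σ₀) p) p.2 :=
    update_hasTy (goodSub_hasTy hρ) hasTy_vr
  have hsub'ty : HasTy (substAux (Function.update ρ (n, σ₀)
      (vr (freshIdx ρ n σ₀ body) σ₀)) body) τb :=
    substAux_hasTy hbody (fun p _ => hρ'ty p)
  have r1 : LamEq (Tm.app (substAux ρ (.lam n σ₀ body)) (quote σ₀ a))
      (substAux (Function.update idSub (freshIdx ρ n σ₀ body, σ₀) (quote σ₀ a))
        (substAux (Function.update ρ (n, σ₀)
          (vr (freshIdx ρ n σ₀ body) σ₀)) body)) := by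
    rw [substAux_lam]
    exact LamEq.beta (HasTy.app (HasTy.lam hsub'ty) (hasTy_quote a))
  have r2 : LamEq (substAux (Function.update idSub (freshIdx ρ n σ₀ body, σ₀) (quote σ₀ a))
        (substAux (Function.update ρ (n, σ₀)
          (vr (freshIdx ρ n σ₀ body) σ₀)) body))
      (substAux (fun p => substAux (Function.update idSub
        (freshIdx ρ n σ₀ body, σ₀) (quote σ₀ a))
        (Function.update ρ (n, σ₀) (vr (freshIdx ρ n σ₀ body) σ₀) p)) body) :=
    lamEq_comp hbody (fun p _ => hρ'ty p) (update_hasTy idSub_hasTy (hasTy_quote a))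
  have r3 : LamEq (substAux (fun p => substAux (Function.update idSub
        (freshIdx ρ n σ₀ body, σ₀) (quote σ₀ a))
        (Function.update ρ (n, σ₀) (vr (freshIdx ρ n σ₀ body) σ₀) p)) body)
      (substAux (Function.update ρ (n, σ₀) (quote σ₀ a)) body) := by
    apply substAux_pointwise_lamEq hbody
    · intro p _
      exact substAux_hasTy (hρ'ty p)
        (fun q _ => update_hasTy idSub_hasTy (hasTy_quote a) q)
    · intro p _; exact update_hasTy (goodSub_hasTy hρ) (hasTy_quote a) p
    · intro p hp
      by_cases hpk : p = (n, σ₀)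
      · subst hpk
        rw [Function.update_self, substAux_vr, Function.update_self, Function.update_self]
      · rw [Function.update_of_ne hpk, Function.update_of_ne hpk]
        rcases hρ p with ⟨hc, _⟩ | hv
        · exact db0_substAux_closed hc _
        · rw [hv, substAux_vr]
          have hfr := freshIdx_spec (ρ := ρ) (n := n) (σ := σ₀)
            (s := body) p (Finset.mem_erase.2 ⟨hpk, hp⟩) (p.1, p.2) (by rw [hv]; simp)
          rw [Function.update_of_ne (by intro hc; exact hfr (congrArg Prod.fst hc))]
          rfl
  exact r1.trans (r2.trans r3)

noncomputable def qsubO (W : Finset (ℕ × Ty)) (I : Interp) : ℕ × Ty → Tm :=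
  fun p => if p ∈ W then vr p.1 p.2 else quote p.2 (I p.1 p.2)

noncomputable def hypFml (I : Interp) (p : ℕ × Ty) : Tm :=
  Tm.app (.app (eqTm p.2) (quote p.2 (I p.1 p.2))) (vr p.1 p.2)

noncomputable def hypSet (W : Finset (ℕ × Ty)) (I : Interp) : Finset Tm :=
  W.image (hypFml I)

theorem goodSub_qsubO (W : Finset (ℕ × Ty)) (I : Interp) : GoodSub (qsubO W I) := by
  intro p
  unfold qsubO
  split
  · exact Or.inr rfl
  · exact Or.inl ⟨fv_quote _, hasTy_quote _⟩

theorem hypSet_typed (W : Finset (ℕ × Ty)) (I : Interp) :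
    ∀ u ∈ hypSet W I, HasTy u .base := by
  intro u hu
  rcases Finset.mem_image.1 hu with ⟨p, _, hpu⟩
  subst hpu
  exact hasTy_eqApp (hasTy_quote _) hasTy_vr

theorem interp_update_same (I : Interp) (n : ℕ) (σ : Ty) (v : σ.sem) :
    Interp.update I n σ v n σ = v := by
  unfold Interp.update
  rw [dif_pos ⟨rfl, rfl⟩]
  rfl

theorem interp_update_noteq (I : Interp) (n : ℕ) (σ : Ty) (v : σ.sem) {m : ℕ} {τ : Ty}
    (h : ((m : ℕ), τ) ≠ (n, σ)) : Interp.update I n σ v m τ = I m τ := by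
  unfold Interp.update
  rw [dif_neg]
  rintro ⟨h1, h2⟩
  exact h (Prod.ext h1 h2)

theorem main_mix : ∀ (M : ℕ) (s : Tm), s.size ≤ M → ∀ (σ : Ty), HasTy s σ →
    ∀ (I : Interp) (W : Finset (ℕ × Ty)),
    Ded (hypSet W I) (Tm.app (.app (eqTm σ) (quote σ (eval I s σ)))
      (substAux (qsubO W I) s)) := by
  intro M
  induction M with
  | zero => intro s h; exact absurd h (by have := size_pos s; omega)
  | succ M IH =>
      intro s hsz σ hty I W
      have hA := hypSet_typed W I
      cases s with
      | name x =>
          cases x with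
          | var n τ =>
              have hσ : σ = τ := hasTy_unique hty hasTy_vr
              subst hσ
              have hev : eval I (.name (.var n σ)) σ = I n σ := by
                rw [show eval I (.name (.var n σ)) σ =
                  (if h : σ = σ then Ty.semCast h (I n σ) else default) from rfl, dif_pos rfl]
                rfl
              rw [hev, show substAux (qsubO W I) (.name (.var n σ)) = qsubO W I (n, σ) from rfl]
              by_cases hw : (n, σ) ∈ W
              · rw [show qsubO W I (n, σ) = vr n σ from by unfold qsubO; rw [if_pos hw]]
                exact dedHyp hA (Finset.mem_image.2 ⟨(n, σ), hw, rfl⟩)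
              · rw [show qsubO W I (n, σ) = quote σ (I n σ) from by unfold qsubO; rw [if_neg hw]]
                exact dedRefl σ hA (hasTy_quote _)
          | bot =>
              have hσ : σ = .base := hasTy_unique hty (HasTy.name .bot)
              subst hσ
              rw [show substAux (qsubO W I) (.name .bot) = botTm from rfl,
                show eval I (.name .bot) .base = false from rfl, quote_base_false]
              apply dedLamEqRev _ (eqBase_applied hasTy_bot hasTy_bot)
                (hasTy_eqApp (σ := .base) hasTy_bot hasTy_bot)
              exact dedEquivSameNeg (dedTopI hA) (dedTopI hA)
          | imp =>
              have hσ : σ = .arrow .base (.arrow .base .base) :=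
                hasTy_unique hty (HasTy.name .imp)
              subst hσ
              rw [show substAux (qsubO W I) (.name .imp) = .name .imp from rfl]
              apply eIntro _ hA (hasTy_quote _)
                (show HasTy (Tm.name .imp) (.arrow .base (.arrow .base .base)) from
                  HasTy.name .imp)
              intro c
              rcases c with ⟨b1, b2, cu⟩
              have hL : appList (quote (.arrow .base (.arrow .base .base))
                  (eval I (.name .imp) (.arrow .base (.arrow .base .base))))
                  (quoteTup (Ty.arrow .base (.arrow .base .base)).args (b1, b2, cu)) =
                  appQ (.arrow .base (.arrow .base .base))
                    (eval I (.name .imp) (.arrow .base (.arrow .base .base)))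
                    (b1, b2, cu) := rfl
              have hR : appList (Tm.name .imp)
                  (quoteTup (Ty.arrow .base (.arrow .base .base)).args (b1, b2, cu)) =
                  impTm (quote .base b1) (quote .base b2) := rfl
              rw [hL, hR]
              cases b1
              · rw [quote_base_false]
                apply dedEquivSame
                · apply dedWeaken (dedGroundPos (by rfl)) (Finset.empty_subset _) hA
                · apply Ded.ded
                  apply dedEfq (dedHyp (insert_typed hA hasTy_bot)
                    (Finset.mem_insert_self _ _))
                  exact hasTy_quote b2
              · cases b2
                · rw [quote_base_true, quote_base_false]
                  apply dedEquivSameNeg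
                  · apply dedWeaken (dedGroundNeg (by rfl)) (Finset.empty_subset _) hA
                  · apply dedNegI
                    exact Ded.mp (dedHyp (insert_typed hA (hasTy_imp hasTy_top hasTy_bot))
                      (Finset.mem_insert_self _ _))
                      (dedTopI (insert_typed hA (hasTy_imp hasTy_top hasTy_bot)))
                · rw [quote_base_true]
                  apply dedEquivSame
                  · apply dedWeaken (dedGroundPos (by rfl)) (Finset.empty_subset _) hA
                  · exact Ded.ded (dedTopI (insert_typed hA hasTy_top))
      | app u w =>
          cases hty with | app hu hw => ?_
          rename_i υ
          have he : eval I (.app u w) σ = eval I u (.arrow υ σ) (eval I w υ) := by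
            rw [show eval I (.app u w) σ =
              (match typeOf w with
                | some τ' => eval I u (.arrow τ' σ) (eval I w τ')
                | none => default) from rfl, typeOf_of_hasTy hw]
          rw [he, substAux_app]
          have ihu := IH u (by simp [Tm.size] at hsz ⊢; omega) (.arrow υ σ) hu I W
          have ihw := IH w (by simp [Tm.size] at hsz ⊢; omega) υ hw I W
          have hU'ty : HasTy (substAux (qsubO W I) u) (.arrow υ σ) :=
            substAux_hasTy hu (fun p _ => goodSub_hasTy (goodSub_qsubO W I) p)
          have hW'ty : HasTy (substAux (qsubO W I) w) υ :=
            substAux_hasTy hw (fun p _ => goodSub_hasTy (goodSub_qsubO W I) p)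
          have hrepσ := (rep_enum (tySize σ) σ le_rfl).1
          have hrepA := (rep_enum (tySize (.arrow υ σ)) (.arrow υ σ) le_rfl).1
          have hrepυ := (rep_enum (tySize υ) υ le_rfl).1
          have q1 : Ded (hypSet W I) (Tm.app (.app (eqTm σ)
              (.app (quote (.arrow υ σ) (eval I u (.arrow υ σ))) (quote υ (eval I w υ))))
              (quote σ (eval I u (.arrow υ σ) (eval I w υ)))) :=
            dedWeaken (dedQApp υ σ _ _) (Finset.empty_subset _) hA
          have q2 : Ded (hypSet W I) (Tm.app (.app (eqTm σ)
              (quote σ (eval I u (.arrow υ σ) (eval I w υ))))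
              (.app (quote (.arrow υ σ) (eval I u (.arrow υ σ))) (quote υ (eval I w υ)))) :=
            dedSym hrepσ hA (HasTy.app (hasTy_quote _) (hasTy_quote _)) (hasTy_quote _) q1
          have q3 := hrepA (hypSet W I) (quote (.arrow υ σ) (eval I u (.arrow υ σ)))
            (substAux (qsubO W I) u)
            (Ctx.appR (Tm.app (eqTm σ) (quote σ (eval I u (.arrow υ σ) (eval I w υ))))
              (Ctx.appL Ctx.hole (quote υ (eval I w υ))))
            hA (hasTy_quote _) hU'ty (fun p _ hc => hc) ihu q2
          have q4 := hrepυ (hypSet W I) (quote υ (eval I w υ)) (substAux (qsubO W I) w)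
            (Ctx.appR (Tm.app (eqTm σ) (quote σ (eval I u (.arrow υ σ) (eval I w υ))))
              (Ctx.appR (substAux (qsubO W I) u) Ctx.hole))
            hA (hasTy_quote _) hW'ty (fun p _ hc => hc) ihw q3
          exact q4
      | lam n σ₀ b =>
          cases hty with | lam hb => ?_
          rename_i τ
          have hg : ∀ a : σ₀.sem, eval I (.lam n σ₀ b) (.arrow σ₀ τ) a =
              eval (I.update n σ₀ a) b τ := by
            intro a
            rw [show eval I (.lam n σ₀ b) (.arrow σ₀ τ) =
              (if h : σ₀ = σ₀ then
                fun a => eval (I.update n σ₀ (Ty.semCast h a)) b τ else default) from rfl,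
              dif_pos rfl]
            rfl
          have hLty : HasTy (substAux (qsubO W I) (.lam n σ₀ b)) (.arrow σ₀ τ) :=
            substAux_hasTy (HasTy.lam hb) (fun p _ => goodSub_hasTy (goodSub_qsubO W I) p)
          have hrepτ := (rep_enum (tySize τ) τ le_rfl).1
          apply dedLamEqRev _ (eqArrow_applied (hasTy_quote _) hLty)
            (hasTy_eqApp (hasTy_quote _) hLty)
          apply dedAndListI hA
          · intro w hw
            rcases List.mem_map.1 hw with ⟨a, _, haw⟩
            subst haw
            have h1 : Ded (hypSet W I) (Tm.app (.app (eqTm τ)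
                (.app (quote (.arrow σ₀ τ) (eval I (.lam n σ₀ b) (.arrow σ₀ τ)))
                  (quote σ₀ a)))
                (quote τ (eval I (.lam n σ₀ b) (.arrow σ₀ τ) a))) :=
              dedWeaken (dedQApp σ₀ τ _ a) (Finset.empty_subset _) hA
            -- IH for the body
            have ihb := IH b (by simp [Tm.size] at hsz ⊢; omega) τ hb (I.update n σ₀ a)
              (W.erase (n, σ₀))
            have hsets : hypSet (W.erase (n, σ₀)) (I.update n σ₀ a) =
                hypSet (W.erase (n, σ₀)) I := by
              unfold hypSet
              apply Finset.image_congr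
              intro p hp
              have hp' : p ∈ W.erase (n, σ₀) := hp
              have hpn : p ≠ (n, σ₀) := (Finset.mem_erase.1 hp').1
              unfold hypFml
              rw [interp_update_noteq I n σ₀ a (by exact hpn)]
            rw [hsets] at ihb
            have ihb' : Ded (hypSet W I) (Tm.app (.app (eqTm τ)
                (quote τ (eval (I.update n σ₀ a) b τ)))
                (substAux (qsubO (W.erase (n, σ₀)) (I.update n σ₀ a)) b)) :=
              dedWeaken ihb (Finset.image_subset_image (Finset.erase_subset _ _)) hA
            have hsub_eq : substAux (Function.update (qsubO W I) (n, σ₀) (quote σ₀ a)) b =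
                substAux (qsubO (W.erase (n, σ₀)) (I.update n σ₀ a)) b := by
              apply substAux_congr
              intro p _
              by_cases hp : p = (n, σ₀)
              · subst hp
                rw [Function.update_self]
                show _ = qsubO (W.erase (n, σ₀)) (I.update n σ₀ a) (n, σ₀)
                unfold qsubO
                rw [if_neg (by simp)]
                rw [show Interp.update I n σ₀ a (n, σ₀).1 (n, σ₀).2 = a from
                  interp_update_same I n σ₀ a]
              · rw [Function.update_of_ne hp]
                unfold qsubO
                by_cases hw' : p ∈ W
                · rw [if_pos hw', if_pos (Finset.mem_erase.2 ⟨hp, hw'⟩)]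
                · rw [if_neg hw', if_neg (fun h => hw' (Finset.mem_erase.1 h).2)]
                  rw [interp_update_noteq I n σ₀ a hp]
            have hbq : LamEq (Tm.app (substAux (qsubO W I) (.lam n σ₀ b)) (quote σ₀ a))
                (substAux (qsubO (W.erase (n, σ₀)) (I.update n σ₀ a)) b) := by
              rw [← hsub_eq]
              exact beta_quote (goodSub_qsubO W I) hb n σ₀ a
            have hEty : HasTy (Tm.app (.app (eqTm τ)
                (quote τ (eval (I.update n σ₀ a) b τ)))
                (Tm.app (substAux (qsubO W I) (.lam n σ₀ b)) (quote σ₀ a))) .base :=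
              hasTy_eqApp (hasTy_quote _) (HasTy.app hLty (hasTy_quote a))
            have hcong : LamEq (Tm.app (.app (eqTm τ)
                (quote τ (eval (I.update n σ₀ a) b τ)))
                (Tm.app (substAux (qsubO W I) (.lam n σ₀ b)) (quote σ₀ a)))
                (Tm.app (.app (eqTm τ) (quote τ (eval (I.update n σ₀ a) b τ)))
                  (substAux (qsubO (W.erase (n, σ₀)) (I.update n σ₀ a)) b)) :=
              lamEq_appR hbq hEty
            have h2 : Ded (hypSet W I) (Tm.app (.app (eqTm τ)
                (quote τ (eval (I.update n σ₀ a) b τ)))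
                (Tm.app (substAux (qsubO W I) (.lam n σ₀ b)) (quote σ₀ a))) :=
              dedLamEqRev ihb' hcong hEty
            have h2' : Ded (hypSet W I) (Tm.app (.app (eqTm τ)
                (quote τ (eval I (.lam n σ₀ b) (.arrow σ₀ τ) a)))
                (Tm.app (substAux (qsubO W I) (.lam n σ₀ b)) (quote σ₀ a))) := by
              rw [hg a]
              exact h2
            exact dedTrans hrepτ hA
              (HasTy.app (hasTy_quote _) (hasTy_quote a)) (hasTy_quote _)
              (HasTy.app hLty (hasTy_quote a)) h1 h2'
          · intro w hw
            rcases List.mem_map.1 hw with ⟨a, _, haw⟩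
            subst haw
            exact hasTy_eqApp (HasTy.app (hasTy_quote _) (hasTy_quote a))
              (HasTy.app hLty (hasTy_quote a))

theorem elim_hyps : ∀ (W : Finset (ℕ × Ty)) (s : Tm), HasTy s .base →
    (∀ I : Interp, Ded (hypSet W I) s) → Ded ∅ s := by
  intro W
  induction W using Finset.induction_on with
  | empty =>
      intro s _ h
      have := h (fun _ σ => default)
      rwa [show hypSet ∅ (fun _ σ => default) = ∅ from Finset.image_empty _] at this
  | @insert p W hp IHW =>
      intro s hs h
      apply IHW s hs
      intro I
      have henum := (rep_enum (tySize p.2) p.2 le_rfl).2 (hypSet W I) (vr p.1 p.2)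
        (hypSet_typed W I) hasTy_vr
      apply dedOrListE henum _ hs
      intro u hu
      rcases List.mem_map.1 hu with ⟨a, _, hau⟩
      subst hau
      have hset : insert (Tm.app (.app (eqTm p.2) (quote p.2 a)) (vr p.1 p.2))
          (hypSet W I) = hypSet (insert p W) (I.update p.1 p.2 a) := by
        unfold hypSet
        rw [Finset.image_insert]
        congr 1
        · unfold hypFml
          rw [show Interp.update I p.1 p.2 a p.1 p.2 = a from interp_update_same I p.1 p.2 a]
        · apply Finset.image_congr
          intro q hq
          have hq' : q ∈ W := hq
          have hqp : q ≠ p := fun hc => hp (hc ▸ hq')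
          unfold hypFml
          rw [interp_update_noteq I p.1 p.2 a (by
            intro hc
            apply hqp
            rcases q with ⟨q1, q2⟩
            rcases p with ⟨p1, p2⟩
            exact hc)]
      rw [hset]
      exact h (I.update p.1 p.2 a)

theorem final_completeness : ∀ (s : Tm), HasTy s .base → ValidFml s → Ded ∅ s := by
  intro s hs hval
  apply elim_hyps (fv s) s hs
  intro I
  have hm := main_mix s.size s le_rfl .base hs I (fv s)
  have he : eval I s .base = true := hval I
  rw [he, quote_base_true] at hm
  have hS'ty : HasTy (substAux (qsubO (fv s) I) s) .base :=
    substAux_hasTy hs (fun p _ => goodSub_hasTy (goodSub_qsubO _ I) p)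
  have h2 := dedLamEq hm (eqBase_applied hasTy_top hS'ty)
  have h3 : Ded (hypSet (fv s) I) (substAux (qsubO (fv s) I) s) :=
    dedEquivMp h2 (dedTopI (hypSet_typed _ _))
  have hid : LamEq (substAux (qsubO (fv s) I) s) s := by
    apply substAux_id_lamEq hs
    intro p hp
    unfold qsubO
    rw [if_pos hp]
  exact Ded.lam h3 hid hs

end Main

/-- `Enum_σ` and `Rep_σ` hold for all types; consequently
(Deductive Completeness) every valid formula is deducible. -/
theorem deductive_completeness :
    (∀ σ : Ty, EnumP σ ∧ RepP σ) ∧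
    (∀ s : Tm, HasTy s .base → ValidFml s → Ded ∅ s) := by
  constructor
  · intro σ
    constructor
    · intro n
      exact (rep_enum (tySize σ) σ le_rfl).2 ∅ (vr n σ)
        (fun u hu => absurd hu (Finset.notMem_empty u)) hasTy_vr
    · exact (rep_enum (tySize σ) σ le_rfl).1
  · exact final_completeness

end PTT
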